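/- arXiv:0906.4540 — 6 statements merged into one kernel-verified Lean document; each statement's English description precedes it below -/
import Mathlib

section
/- For every u in the Hardy space H^{1/2}_+ of the circle, one has ‖u‖_{L⁴}⁴ ≤ ‖u‖_{L²}² (‖u‖_{L²}² + ‖u‖_{H^{1/2}}²), i.e. E(u) ≤ Q(u)(Q(u) + 2M(u)), where Q(u)=‖u‖_{L²}², M(u)=Σ_{k≥0} k|û(k)|², E(u)=‖u‖_{L⁴}⁴. Equality holds if and only if u(z) = α/(1−pz) for some α ∈ ℂ and |p| < 1 (or u = 0). -/
noncomputable section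

open Complex Real

/-- The function on the circle with nonnegative Fourier coefficients `a`. -/
def hardyFun (a : ℕ → ℂ) : ℝ → ℂ :=
  fun θ => ∑' k : ℕ, a k * Complex.exp (k * θ * Complex.I)

/-- `Q(u) = ‖u‖_{L²}²`. -/
def Qc (a : ℕ → ℂ) : ℝ := ∑' k : ℕ, ‖a k‖ ^ 2

/-- `M(u) = Σ k |û(k)|²`, the homogeneous `H^{1/2}` seminorm squared. -/
def Mc (a : ℕ → ℂ) : ℝ := ∑' k : ℕ, (k : ℝ) * ‖a k‖ ^ 2

/-- `E(u) = ‖u‖_{L⁴}⁴` with respect to normalized Lebesgue measure on the circle. -/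
def Ec (a : ℕ → ℂ) : ℝ :=
  (∫ θ in (0 : ℝ)..(2 * π), ‖hardyFun a θ‖ ^ 4) / (2 * π)

namespace Stmt1Aux

open Finset MeasureTheory intervalIntegral

def cC (a : ℕ → ℂ) (n : ℕ) : ℂ := ∑ j ∈ Finset.range (n+1), a j * a (n - j)
def xR (a : ℕ → ℂ) (k : ℕ) : ℝ := ‖a k‖ ^ 2
def TR (a : ℕ → ℂ) (n : ℕ) : ℝ := ∑ j ∈ Finset.range (n+1), xR a j * xR a (n-j)

section
variable {a : ℕ → ℂ}

lemma norm_term (b : ℂ) (k : ℕ) (θ : ℝ) : ‖b * Complex.exp ((k:ℂ) * θ * I)‖ = ‖b‖ := by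
  rw [norm_mul]
  have : ((k:ℂ) * θ * I) = ((k * θ : ℝ) : ℂ) * I := by push_cast; ring
  rw [this]
  simp [Complex.norm_exp]

lemma term_summable (hA : Summable fun k => ‖a k‖) (θ : ℝ) :
    Summable fun k : ℕ => ‖a k * Complex.exp ((k:ℂ) * θ * I)‖ := by
  simpa only [norm_term] using hA

lemma cC_norm_summable (hA : Summable fun k => ‖a k‖) : Summable fun n => ‖cC a n‖ :=
  summable_norm_sum_mul_range_of_summable_norm hA hA

lemma hardy_continuous (hA : Summable fun k => ‖a k‖) : Continuous (hardyFun a) := by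
  apply continuous_tsum (u := fun k => ‖a k‖) _ hA
  · intro k θ
    exact (norm_term (a k) k θ).le
  · intro k
    apply Continuous.mul continuous_const
    exact Complex.continuous_exp.comp (by fun_prop)

lemma hardy_sq (hA : Summable fun k => ‖a k‖) (θ : ℝ) :
    hardyFun a θ * hardyFun a θ = ∑' n, cC a n * Complex.exp ((n:ℂ) * θ * I) := by
  rw [hardyFun, tsum_mul_tsum_eq_tsum_sum_range_of_summable_norm (term_summable hA θ)
    (term_summable hA θ)]
  refine tsum_congr fun n => ?_
  rw [cC, Finset.sum_mul]
  refine Finset.sum_congr rfl fun k hk => ?_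
  have hk' : k ≤ n := Nat.lt_succ_iff.mp (Finset.mem_range.mp hk)
  have : Complex.exp ((k:ℂ) * θ * I) * Complex.exp (((n - k : ℕ):ℂ) * θ * I)
      = Complex.exp ((n:ℂ) * θ * I) := by
    rw [← Complex.exp_add]
    congr 1
    rw [Nat.cast_sub hk']
    ring
  calc a k * Complex.exp ((k:ℂ) * θ * I) * (a (n-k) * Complex.exp (((n-k:ℕ):ℂ) * θ * I))
      = a k * a (n-k) * (Complex.exp ((k:ℂ) * θ * I) * Complex.exp (((n-k:ℕ):ℂ) * θ * I)) := by ring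
    _ = a k * a (n - k) * Complex.exp ((n:ℂ) * θ * I) := by rw [this]

lemma conj_exp_eq (m : ℕ) (θ : ℝ) :
    (starRingEnd ℂ) (Complex.exp ((m : ℂ) * θ * I)) = Complex.exp (-((m : ℂ) * θ * I)) := by
  rw [← Complex.exp_conj]
  congr 1
  simp [Complex.conj_I, mul_comm]

lemma orth (n m : ℕ) :
    (∫ θ in (0:ℝ)..(2*Real.pi),
        Complex.exp ((n : ℂ) * θ * I) * (starRingEnd ℂ) (Complex.exp ((m : ℂ) * θ * I)))
      = if n = m then (2*Real.pi : ℂ) else 0 := by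
  have hint : ∀ θ : ℝ, Complex.exp ((n : ℂ) * θ * I) * (starRingEnd ℂ) (Complex.exp ((m : ℂ) * θ * I))
      = Complex.exp ((((n : ℂ) - m) * I) * θ) := by
    intro θ
    rw [conj_exp_eq, ← Complex.exp_add]
    congr 1
    ring
  simp only [hint]
  rcases eq_or_ne n m with h | h
  · subst h
    simp only [sub_self, zero_mul, Complex.exp_zero]
    simp [intervalIntegral.integral_const]
  · have hc : ((n : ℂ) - m) * I ≠ 0 := by
      apply mul_ne_zero _ Complex.I_ne_zero
      rw [sub_ne_zero]
      exact_mod_cast fun hh => h (Nat.cast_injective hh)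
    rw [if_neg h, integral_exp_mul_complex hc]
    have h1 : (((n : ℂ) - m) * I) * (2 * Real.pi : ℝ) = ((n : ℤ) - (m : ℤ) : ℤ) * (2 * Real.pi * I) := by
      push_cast; ring
    rw [h1, Complex.exp_int_mul_two_pi_mul_I]
    simp
lemma integral_Ec (hA : Summable fun k => ‖a k‖) :
    (∫ θ in (0:ℝ)..(2*Real.pi), ‖hardyFun a θ‖ ^ 4)
      = (∑' n, ‖cC a n‖^2) * (2*Real.pi) := by
  classical
  have h2π : (0:ℝ) ≤ 2*Real.pi := by positivity
  set μ : Measure ℝ := volume.restrict (Set.Ioc (0:ℝ) (2*Real.pi)) with hμ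
  set F : ℕ×ℕ → ℝ → ℂ := fun nm θ =>
    (cC a nm.1 * Complex.exp ((nm.1:ℂ) * θ * I)) *
      (starRingEnd ℂ) (cC a nm.2 * Complex.exp ((nm.2:ℂ) * θ * I)) with hF
  set w : ℝ → ℂ := fun θ => (hardyFun a θ * hardyFun a θ) *
      (starRingEnd ℂ) (hardyFun a θ * hardyFun a θ) with hwdef
  have hc := cC_norm_summable hA
  have hcsum : ∀ θ : ℝ, Summable fun n : ℕ => ‖cC a n * Complex.exp ((n:ℂ) * θ * I)‖ := by
    intro θ; simpa only [norm_term] using hc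
  -- pointwise expansion of w as a double series
  have hw : ∀ θ, w θ = ∑' nm : ℕ×ℕ, F nm θ := by
    intro θ
    have h1 : (starRingEnd ℂ) (hardyFun a θ * hardyFun a θ)
        = ∑' m : ℕ, (starRingEnd ℂ) (cC a m * Complex.exp ((m:ℂ) * θ * I)) := by
      rw [hardy_sq hA θ]
      simp only [starRingEnd_apply]
      exact tsum_star
    have h2 : Summable fun m : ℕ => ‖(starRingEnd ℂ) (cC a m * Complex.exp ((m:ℂ) * θ * I))‖ := by
      simpa only [RCLike.norm_conj] using hcsum θ
    rw [hwdef]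
    simp only
    rw [h1, hardy_sq hA θ, tsum_mul_tsum_of_summable_norm (hcsum θ) h2]
  have hwre : ∀ θ, ‖hardyFun a θ‖ ^ 4 = (w θ).re := by
    intro θ
    show _ = ((hardyFun a θ * hardyFun a θ) * (starRingEnd ℂ) (hardyFun a θ * hardyFun a θ)).re
    rw [Complex.mul_conj, Complex.ofReal_re, Complex.normSq_mul, Complex.normSq_eq_norm_sq]
    ring
  have hu := hardy_continuous hA
  have hcont : Continuous w := by
    rw [hwdef]
    exact (hu.mul hu).mul (Complex.continuous_conj.comp (hu.mul hu))
  have hwint : Integrable w μ := by rw [hμ]; exact hcont.integrableOn_Ioc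
  have hFcont : ∀ nm : ℕ×ℕ, Continuous (F nm) := by
    intro nm
    rw [hF]
    have e1 : Continuous fun θ : ℝ => Complex.exp ((nm.1:ℂ) * θ * I) :=
      Complex.continuous_exp.comp (by fun_prop)
    have e2 : Continuous fun θ : ℝ => Complex.exp ((nm.2:ℂ) * θ * I) :=
      Complex.continuous_exp.comp (by fun_prop)
    exact (continuous_const.mul e1).mul
      (Complex.continuous_conj.comp (continuous_const.mul e2))
  have hFint : ∀ nm : ℕ×ℕ, Integrable (F nm) μ := by
    intro nm; rw [hμ]; exact (hFcont nm).integrableOn_Ioc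
  have hFnorm : ∀ (nm : ℕ×ℕ) (θ : ℝ), ‖F nm θ‖ = ‖cC a nm.1‖ * ‖cC a nm.2‖ := by
    intro nm θ
    rw [hF]
    simp only
    rw [norm_mul, RCLike.norm_conj, norm_term, norm_term]
  have hFsum : Summable fun nm : ℕ×ℕ => ∫ θ, ‖F nm θ‖ ∂μ := by
    have heq : (fun nm : ℕ×ℕ => ∫ θ, ‖F nm θ‖ ∂μ)
        = fun nm => (2*Real.pi) * (‖cC a nm.1‖ * ‖cC a nm.2‖) := by
      funext nm
      simp only [hFnorm]
      rw [hμ, MeasureTheory.integral_const]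
      simp [Real.volume_Ioc, ENNReal.toReal_ofReal h2π, smul_eq_mul, Real.pi_pos.le]
    rw [heq]
    exact (hc.mul_of_nonneg hc (fun n => norm_nonneg _) fun n => norm_nonneg _).mul_left _
  have hswap := MeasureTheory.integral_tsum_of_summable_integral_norm hFint hFsum
  have hSumInt : Summable fun nm : ℕ×ℕ => ∫ θ, F nm θ ∂μ :=
    (MeasureTheory.hasSum_integral_of_summable_integral_norm hFint hFsum).summable
  have hIval : ∀ nm : ℕ×ℕ, (∫ θ, F nm θ ∂μ)
      = if nm.1 = nm.2 then ((‖cC a nm.1‖^2 : ℝ) : ℂ) * ((2*Real.pi : ℝ) : ℂ) else 0 := by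
    intro nm
    have hptw : ∀ θ:ℝ, F nm θ = (cC a nm.1 * (starRingEnd ℂ) (cC a nm.2)) *
        (Complex.exp ((nm.1:ℂ)*θ*I) * (starRingEnd ℂ) (Complex.exp ((nm.2:ℂ)*θ*I))) := by
      intro θ; rw [hF]; simp only [map_mul]; ring
    rw [hμ, ← intervalIntegral.integral_of_le h2π]
    rw [show F nm = fun θ:ℝ => (cC a nm.1 * (starRingEnd ℂ) (cC a nm.2)) *
        (Complex.exp ((nm.1:ℂ)*θ*I) * (starRingEnd ℂ) (Complex.exp ((nm.2:ℂ)*θ*I)))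
      from funext hptw]
    rw [intervalIntegral.integral_const_mul, orth]
    rcases eq_or_ne nm.1 nm.2 with h | h
    · rw [if_pos h, if_pos h, ← h, Complex.mul_conj, Complex.normSq_eq_norm_sq]
      norm_cast
    · rw [if_neg h, if_neg h, mul_zero]
  have hG : (fun nm : ℕ×ℕ => ∫ θ, F nm θ ∂μ)
      = fun nm => if nm.1 = nm.2 then ((‖cC a nm.1‖^2 : ℝ) : ℂ) * ((2*Real.pi : ℝ) : ℂ) else 0 :=
    funext hIval
  have hGsum : Summable (fun nm : ℕ×ℕ =>
      if nm.1 = nm.2 then ((‖cC a nm.1‖^2 : ℝ) : ℂ) * ((2*Real.pi : ℝ) : ℂ) else 0) :=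
    hG ▸ hSumInt
  have hdiag : (∑' nm : ℕ×ℕ,
        if nm.1 = nm.2 then ((‖cC a nm.1‖^2 : ℝ) : ℂ) * ((2*Real.pi : ℝ) : ℂ) else 0)
      = (((∑' n, ‖cC a n‖^2) * (2*Real.pi) : ℝ) : ℂ) := by
    rw [Summable.tsum_prod hGsum]
    have inner : ∀ n : ℕ,
        (∑' m : ℕ, if n = m then ((‖cC a n‖^2 : ℝ) : ℂ) * ((2*Real.pi : ℝ) : ℂ) else 0)
        = ((‖cC a n‖^2 : ℝ) : ℂ) * ((2*Real.pi : ℝ) : ℂ) := by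
      intro n
      rw [show (fun m => if n = m then ((‖cC a n‖^2 : ℝ) : ℂ) * ((2*Real.pi : ℝ) : ℂ) else 0)
          = fun m => if m = n then ((‖cC a n‖^2 : ℝ) : ℂ) * ((2*Real.pi : ℝ) : ℂ) else 0 from by
        funext m; simp [eq_comm]]
      exact tsum_ite_eq n _
    rw [tsum_congr inner, Complex.ofReal_mul, ← tsum_mul_right, Complex.ofReal_tsum]
    push_cast
    rfl
  calc ∫ θ in (0:ℝ)..(2*Real.pi), ‖hardyFun a θ‖^4
      = ∫ θ in (0:ℝ)..(2*Real.pi), (w θ).re := by simp only [hwre]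
    _ = ∫ θ, (w θ).re ∂μ := by rw [hμ, intervalIntegral.integral_of_le h2π]
    _ = (∫ θ, w θ ∂μ).re := by
        have := integral_re hwint
        simpa using this
    _ = (∑' nm : ℕ×ℕ, ∫ θ, F nm θ ∂μ).re := by
        rw [hswap, show (fun θ => w θ) = fun θ => ∑' nm : ℕ×ℕ, F nm θ from funext hw]
    _ = (∑' n, ‖cC a n‖^2) * (2*Real.pi) := by
        rw [hG, hdiag, Complex.ofReal_re]

lemma Ec_eq (hA : Summable fun k => ‖a k‖) : Ec a = ∑' n, ‖cC a n‖ ^ 2 := by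
  rw [Ec, integral_Ec hA, mul_div_assoc, div_self (by positivity), mul_one]
lemma xR_nonneg (k : ℕ) : 0 ≤ xR a k := sq_nonneg _
lemma TR_nonneg (n : ℕ) : 0 ≤ TR a n :=
  Finset.sum_nonneg fun j _ => mul_nonneg (xR_nonneg j) (xR_nonneg _)

lemma hx (ha : Summable fun k : ℕ => (1 + (k : ℝ)) * ‖a k‖ ^ 2) : Summable (xR a) := by
  refine Summable.of_nonneg_of_le (fun k => xR_nonneg k) (fun k => ?_) ha
  rw [xR]
  nlinarith [sq_nonneg ‖a k‖, (Nat.cast_nonneg k : (0:ℝ) ≤ k)]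

lemma h2kx (ha : Summable fun k : ℕ => (1 + (k : ℝ)) * ‖a k‖ ^ 2) :
    Summable (fun k : ℕ => 2 * (k : ℝ) * xR a k) := by
  refine Summable.of_nonneg_of_le
    (fun k => mul_nonneg (by positivity) (xR_nonneg k)) (fun k => ?_) (ha.mul_left 2)
  rw [xR]
  nlinarith [sq_nonneg ‖a k‖, (Nat.cast_nonneg k : (0:ℝ) ≤ k)]

lemma reflect_sum (x : ℕ → ℝ) (n : ℕ) :
    ∑ j ∈ Finset.range (n+1), (2 * ((n - j : ℕ) : ℝ)) * (x j * x (n-j))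
      = (n : ℝ) * ∑ j ∈ Finset.range (n+1), x j * x (n-j) := by
  have hrefl : ∑ j ∈ Finset.range (n+1), ((n - j : ℕ) : ℝ) * (x j * x (n-j))
      = ∑ j ∈ Finset.range (n+1), (j : ℝ) * (x j * x (n-j)) := by
    have := Finset.sum_range_reflect
      (fun j => ((n - j : ℕ) : ℝ) * (x j * x (n-j))) (n+1)
    simp only [Nat.add_sub_cancel] at this
    rw [← this]
    refine Finset.sum_congr rfl fun j hj => ?_
    have hj' : j ≤ n := Nat.lt_succ_iff.mp (Finset.mem_range.mp hj)
    rw [Nat.sub_sub_self hj']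
    ring_nf
  have hsplit : ∀ j ∈ Finset.range (n+1),
      (2 * ((n - j : ℕ) : ℝ)) * (x j * x (n-j))
      = ((n - j : ℕ) : ℝ) * (x j * x (n-j)) + ((n - j : ℕ) : ℝ) * (x j * x (n-j)) := by
    intro j _; ring
  rw [Finset.sum_congr rfl hsplit, Finset.sum_add_distrib]
  nth_rewrite 2 [hrefl]
  rw [← Finset.sum_add_distrib, Finset.mul_sum]
  refine Finset.sum_congr rfl fun j hj => ?_
  have hj' : j ≤ n := Nat.lt_succ_iff.mp (Finset.mem_range.mp hj)
  have hcast : ((n - j : ℕ) : ℝ) = (n : ℝ) - j := by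
    rw [Nat.cast_sub hj']
  rw [hcast]
  ring

lemma sum_identity (s : Finset ℕ) (z : ℕ → ℂ) :
    2 * ((s.card : ℝ) * ∑ j ∈ s, ‖z j‖ ^ 2) =
      2 * ‖∑ j ∈ s, z j‖ ^ 2 + ∑ j ∈ s, ∑ l ∈ s, ‖z j - z l‖ ^ 2 := by
  have hns : ∀ w : ℂ, ‖w‖ ^ 2 = Complex.normSq w := fun w => by
    rw [Complex.normSq_eq_norm_sq]
  have key : ∀ w : ℂ, Complex.normSq w = (w * (starRingEnd ℂ) w).re := fun w => by
    rw [Complex.mul_conj]; simp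
  simp only [hns]
  have hre : ((∑ j ∈ s, z j) * (starRingEnd ℂ) (∑ l ∈ s, z l)).re
      = ∑ j ∈ s, ∑ l ∈ s, (z j * (starRingEnd ℂ) (z l)).re := by
    rw [map_sum, Finset.sum_mul_sum]
    rw [Complex.re_sum]
    exact Finset.sum_congr rfl fun j _ => Complex.re_sum _ _
  have expand : ∑ j ∈ s, ∑ l ∈ s, Complex.normSq (z j - z l)
      = (s.card : ℝ) * ∑ j ∈ s, Complex.normSq (z j)
        + (s.card : ℝ) * ∑ l ∈ s, Complex.normSq (z l)
        - 2 * ∑ j ∈ s, ∑ l ∈ s, (z j * (starRingEnd ℂ) (z l)).re := by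
    have step : ∀ j ∈ s, ∑ l ∈ s, Complex.normSq (z j - z l)
        = (s.card : ℝ) * Complex.normSq (z j) + ∑ l ∈ s, Complex.normSq (z l)
          - 2 * ∑ l ∈ s, (z j * (starRingEnd ℂ) (z l)).re := by
      intro j _
      simp only [Complex.normSq_sub, Finset.sum_sub_distrib, Finset.sum_add_distrib,
        Finset.sum_const, nsmul_eq_mul, Finset.mul_sum]
    rw [Finset.sum_congr rfl step]
    simp only [Finset.sum_sub_distrib, Finset.sum_add_distrib, ← Finset.mul_sum,
      Finset.sum_const, nsmul_eq_mul]
  rw [key (∑ j ∈ s, z j), hre, expand]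
  ring

lemma znorm (n j : ℕ) : ‖a j * a (n - j)‖ ^ 2 = xR a j * xR a (n-j) := by
  rw [norm_mul, mul_pow, xR, xR]

lemma key_identity (n : ℕ) :
    2 * (((n:ℝ)+1) * TR a n) = 2 * ‖cC a n‖ ^ 2
      + ∑ j ∈ Finset.range (n+1), ∑ l ∈ Finset.range (n+1),
          ‖a j * a (n-j) - a l * a (n-l)‖ ^ 2 := by
  have h := sum_identity (Finset.range (n+1)) (fun j => a j * a (n-j))
  simp only [Finset.card_range] at h
  have h1 : ∑ j ∈ Finset.range (n+1), ‖a j * a (n-j)‖ ^ 2 = TR a n := by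
    rw [TR]; exact Finset.sum_congr rfl fun j _ => znorm n j
  rw [h1] at h
  rw [show ((n:ℝ)+1) = ((n+1 : ℕ) : ℝ) by push_cast; ring]
  rw [h]
  rfl

lemma gap_nonneg (n : ℕ) :
    (0:ℝ) ≤ ∑ j ∈ Finset.range (n+1), ∑ l ∈ Finset.range (n+1),
        ‖a j * a (n-j) - a l * a (n-l)‖ ^ 2 :=
  Finset.sum_nonneg fun j _ => Finset.sum_nonneg fun l _ => sq_nonneg _

lemma per_le (n : ℕ) : ‖cC a n‖ ^ 2 ≤ ((n:ℝ)+1) * TR a n := by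
  have := key_identity (a := a) n
  have := gap_nonneg (a := a) n
  linarith

lemma per_eq_consequence {n : ℕ}
    (h : ‖cC a n‖ ^ 2 = ((n:ℝ)+1) * TR a n) :
    ∀ j ≤ n, ∀ l ≤ n, a j * a (n-j) = a l * a (n-l) := by
  intro j hj l hl
  have hk := key_identity (a := a) n
  rw [h] at hk
  have hzero : ∑ j ∈ Finset.range (n+1), ∑ l ∈ Finset.range (n+1),
      ‖a j * a (n-j) - a l * a (n-l)‖ ^ 2 = 0 := by linarith
  have h1 := (Finset.sum_eq_zero_iff_of_nonneg
    (fun j _ => Finset.sum_nonneg fun l _ => sq_nonneg _)).mp hzero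
    j (Finset.mem_range.mpr (Nat.lt_succ_of_le hj))
  have h2 := (Finset.sum_eq_zero_iff_of_nonneg (fun l _ => sq_nonneg _)).mp h1
    l (Finset.mem_range.mpr (Nat.lt_succ_of_le hl))
  have := pow_eq_zero_iff (n := 2) (by norm_num) |>.mp h2
  rw [norm_eq_zero] at this
  exact sub_eq_zero.mp this




lemma S2_eq (n : ℕ) :
    ∑ k ∈ Finset.range (n+1), xR a k * (2 * ((n-k : ℕ):ℝ) * xR a (n - k))
      = (n : ℝ) * TR a n := by
  rw [TR, ← reflect_sum (xR a) n]
  exact Finset.sum_congr rfl fun k _ => by ring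

lemma rhs_eq (ha : Summable fun k : ℕ => (1 + (k : ℝ)) * ‖a k‖ ^ 2) :
    Qc a * (Qc a + 2 * Mc a) = ∑' n, ((1:ℝ) + n) * TR a n := by
  have hxs := hx ha
  have h2 := h2kx ha
  have hx' : Summable fun k => ‖xR a k‖ := by
    simpa only [Real.norm_eq_abs] using hxs.abs
  have h2' : Summable fun k : ℕ => ‖2 * (k:ℝ) * xR a k‖ := by
    simpa only [Real.norm_eq_abs] using h2.abs
  have hT1 : Summable fun n => ∑ k ∈ Finset.range (n+1), xR a k * xR a (n - k) :=
    (summable_norm_sum_mul_range_of_summable_norm hx' hx').of_norm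
  have hT2 : Summable fun n =>
      ∑ k ∈ Finset.range (n+1), xR a k * (2 * ((n-k : ℕ):ℝ) * xR a (n - k)) :=
    (summable_norm_sum_mul_range_of_summable_norm hx' h2').of_norm
  have hQ : Qc a = ∑' k, xR a k := rfl
  have hM : 2 * Mc a = ∑' k : ℕ, 2 * (k:ℝ) * xR a k := by
    rw [Mc, ← tsum_mul_left]
    exact tsum_congr fun k => by unfold xR; ring
  rw [mul_add, hQ, hM,
    tsum_mul_tsum_eq_tsum_sum_range_of_summable_norm hx' hx',
    tsum_mul_tsum_eq_tsum_sum_range_of_summable_norm hx' h2',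
    ← Summable.tsum_add hT1 hT2]
  refine tsum_congr fun n => ?_
  rw [S2_eq]
  have : ∑ k ∈ Finset.range (n+1), xR a k * xR a (n - k) = TR a n := rfl
  rw [this]
  ring

lemma nTR_summable (ha : Summable fun k : ℕ => (1 + (k : ℝ)) * ‖a k‖ ^ 2) :
    Summable fun n : ℕ => ((1:ℝ) + n) * TR a n := by
  have hxs := hx ha
  have h2 := h2kx ha
  have hx' : Summable fun k => ‖xR a k‖ := by
    simpa only [Real.norm_eq_abs] using hxs.abs
  have h2' : Summable fun k : ℕ => ‖2 * (k:ℝ) * xR a k‖ := by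
    simpa only [Real.norm_eq_abs] using h2.abs
  have hT1 : Summable fun n => ∑ k ∈ Finset.range (n+1), xR a k * xR a (n - k) :=
    (summable_norm_sum_mul_range_of_summable_norm hx' hx').of_norm
  have hT2 : Summable fun n =>
      ∑ k ∈ Finset.range (n+1), xR a k * (2 * ((n-k : ℕ):ℝ) * xR a (n - k)) :=
    (summable_norm_sum_mul_range_of_summable_norm hx' h2').of_norm
  have := hT1.add hT2
  refine this.congr fun n => ?_
  rw [S2_eq]
  have h3 : ∑ k ∈ Finset.range (n+1), xR a k * xR a (n - k) = TR a n := rfl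
  rw [h3]
  ring


lemma geom_cC (α p : ℂ) (n : ℕ) :
    cC (fun k => α * p ^ k) n = ((n+1 : ℕ) : ℂ) * (α ^ 2 * p ^ n) := by
  rw [cC]
  have hterm : ∀ j ∈ Finset.range (n+1), (α * p ^ j) * (α * p ^ (n - j)) = α ^ 2 * p ^ n := by
    intro j hj
    have hj' : j ≤ n := Nat.lt_succ_iff.mp (Finset.mem_range.mp hj)
    rw [show (α * p ^ j) * (α * p ^ (n-j)) = α ^ 2 * (p ^ j * p ^ (n-j)) by ring, ← pow_add]
    congr 2
    omega
  rw [Finset.sum_congr rfl hterm, Finset.sum_const, Finset.card_range, nsmul_eq_mul]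

lemma geom_TR (α p : ℂ) (n : ℕ) :
    TR (fun k => α * p ^ k) n = ((n+1 : ℕ) : ℝ) * ((‖α‖ ^ 2) ^ 2 * (‖p‖ ^ 2) ^ n) := by
  rw [TR]
  have hterm : ∀ j ∈ Finset.range (n+1),
      xR (fun k => α * p ^ k) j * xR (fun k => α * p ^ k) (n - j)
        = (‖α‖ ^ 2) ^ 2 * (‖p‖ ^ 2) ^ n := by
    intro j hj
    have hj' : j ≤ n := Nat.lt_succ_iff.mp (Finset.mem_range.mp hj)
    unfold xR
    simp only [norm_mul, norm_pow, mul_pow]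
    rw [show ∀ x y : ℝ, (‖α‖^2 * x) * (‖α‖^2 * y) = (‖α‖^2)^2 * (x*y) from fun x y => by ring]
    rw [show ((‖p‖^j)^2) * ((‖p‖^(n-j))^2) = (‖p‖^2)^j * (‖p‖^2)^(n-j) by ring, ← pow_add]
    congr 2
    omega
  rw [Finset.sum_congr rfl hterm, Finset.sum_const, Finset.card_range, nsmul_eq_mul]

lemma geom_eq (α p : ℂ) (n : ℕ) :
    ‖cC (fun k => α * p ^ k) n‖ ^ 2 = ((1:ℝ) + n) * TR (fun k => α * p ^ k) n := by
  rw [geom_cC, geom_TR, norm_mul, norm_mul, norm_pow, norm_pow, Complex.norm_natCast]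
  push_cast
  ring

lemma geom_norm_summable {α p : ℂ} (hp : ‖p‖ < 1) :
    Summable fun k : ℕ => ‖α * p ^ k‖ := by
  have : Summable fun k : ℕ => ‖α‖ * ‖p‖ ^ k :=
    (summable_geometric_of_lt_one (norm_nonneg p) hp).mul_left _
  refine this.congr fun k => ?_
  rw [norm_mul, norm_pow]

end

end Stmt1Aux

open Stmt1Aux in
/-- For every `u ∈ H^{1/2}_+`, `E(u) ≤ Q(u)(Q(u) + 2M(u))`, with equality
iff `u(z) = α/(1-pz)` for some `α ∈ ℂ`, `|p| < 1` (the case `α = 0` giving `u = 0`). -/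
theorem stmt1 (a : ℕ → ℂ) (ha : Summable fun k : ℕ => (1 + (k : ℝ)) * ‖a k‖ ^ 2) :
    Ec a ≤ Qc a * (Qc a + 2 * Mc a) ∧
      (Ec a = Qc a * (Qc a + 2 * Mc a) ↔
        ∃ (α p : ℂ), ‖p‖ < 1 ∧ ∀ k : ℕ, a k = α * p ^ k) := by
  classical
  have hxs : Summable (xR a) := hx ha
  have hQx : Qc a = ∑' k, xR a k := rfl
  by_cases hA : Summable fun k : ℕ => ‖a k‖
  · -- absolutely summable case
    have hEc : Ec a = ∑' n, ‖cC a n‖ ^ 2 := Ec_eq hA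
    have hrhs : Qc a * (Qc a + 2 * Mc a) = ∑' n, ((1:ℝ) + n) * TR a n := rhs_eq ha
    have hsumT := nTR_summable ha
    have hle : ∀ n : ℕ, ‖cC a n‖ ^ 2 ≤ ((1:ℝ) + n) * TR a n := by
      intro n
      rw [add_comm (1:ℝ) (n:ℝ)]
      exact per_le n
    have hsq : Summable fun n => ‖cC a n‖ ^ 2 :=
      Summable.of_nonneg_of_le (fun n => sq_nonneg _) hle hsumT
    refine ⟨by rw [hEc, hrhs]; exact Summable.tsum_le_tsum hle hsq hsumT, ?_, ?_⟩
    · -- equality → geometric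
      intro hEq
      rw [hEc, hrhs] at hEq
      have hterm : ∀ n : ℕ, ‖cC a n‖ ^ 2 = ((1:ℝ) + n) * TR a n := by
        intro n
        by_contra hne
        have hlt : ‖cC a n‖ ^ 2 < ((1:ℝ) + n) * TR a n := lt_of_le_of_ne (hle n) hne
        exact ne_of_lt (Summable.tsum_lt_tsum hle hlt hsq hsumT) hEq
      have heq' : ∀ n : ℕ, ∀ j ≤ n, ∀ l ≤ n, a j * a (n-j) = a l * a (n-l) := by
        intro n
        refine per_eq_consequence ?_
        rw [hterm n]; ring
      by_cases hall : ∀ k, a k = 0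
      · exact ⟨0, 0, by simp, fun k => by rw [hall k, zero_mul]⟩
      · push_neg at hall
        have ha0 : a 0 ≠ 0 := by
          by_contra h0
          have hex : ∃ k, a k ≠ 0 := hall
          have hk0 : a (Nat.find hex) ≠ 0 := Nat.find_spec hex
          set k0 := Nat.find hex with hk0def
          have hpos : 0 < k0 := Nat.pos_of_ne_zero (fun h => hk0 (by rw [h]; exact h0))
          have h2k := heq' (2*k0) k0 (by omega) 0 (by omega)
          rw [show 2*k0 - k0 = k0 by omega, Nat.sub_zero, h0, zero_mul] at h2k
          exact hk0 (mul_self_eq_zero.mp h2k)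
        set p : ℂ := a 1 / a 0 with hpdef
        have hgeom : ∀ k : ℕ, a k = a 0 * p ^ k := by
          intro k
          induction k with
          | zero => simp
          | succ n ih =>
            have h := heq' (n+1) 1 (by omega) 0 (by omega)
            rw [Nat.sub_zero, show n+1-1 = n from rfl] at h
            have hrec : a (n+1) = p * a n := by
              rw [hpdef, div_mul_eq_mul_div, eq_div_iff ha0]
              linear_combination -h
            rw [hrec, ih]
            ring
        refine ⟨a 0, p, ?_, hgeom⟩
        have hxg : Summable (fun k : ℕ => ‖a 0‖ ^ 2 * (‖p‖ ^ 2) ^ k) := by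
          refine hxs.congr fun k => ?_
          rw [xR, hgeom k, norm_mul, norm_pow, mul_pow]
          ring
        have hga : ‖a 0‖ ^ 2 ≠ 0 := pow_ne_zero 2 (norm_ne_zero_iff.mpr ha0)
        have hsg : Summable (fun k : ℕ => (‖p‖ ^ 2) ^ k) :=
          (summable_mul_left_iff hga).mp hxg
        have hlt : ‖p‖ ^ 2 < 1 := by
          have := summable_geometric_iff_norm_lt_one.mp hsg
          rwa [Real.norm_eq_abs, _root_.abs_of_nonneg (by positivity)] at this
        nlinarith [norm_nonneg p]
    · -- geometric → equality
      rintro ⟨α, p, hp, hak⟩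
      rw [hEc, hrhs]
      refine tsum_congr fun n => ?_
      rw [show a = fun k => α * p ^ k from funext hak]
      exact geom_eq α p n
  · -- non-absolutely-summable case: hardyFun vanishes identically
    have hzero : ∀ θ : ℝ, hardyFun a θ = 0 := by
      intro θ
      refine tsum_eq_zero_of_not_summable fun hsum => hA ?_
      have := summable_norm_iff.mpr hsum
      simpa only [norm_term] using this
    have hE0 : Ec a = 0 := by
      rw [Ec]
      simp [hzero]
    have hane : ∃ k, a k ≠ 0 := by
      by_contra h
      push_neg at h
      exact hA (by simp only [h, norm_zero]; exact summable_zero)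
    obtain ⟨k, hk⟩ := hane
    have hQpos : 0 < Qc a := by
      have h1 : 0 < xR a k := pow_pos (norm_pos_iff.mpr hk) 2
      have h2 : xR a k ≤ Qc a := by
        rw [hQx]
        exact Summable.le_tsum hxs k fun i _ => xR_nonneg i
      linarith
    have hM : 0 ≤ Mc a :=
      tsum_nonneg fun k => mul_nonneg (Nat.cast_nonneg k) (sq_nonneg _)
    have hRpos : 0 < Qc a * (Qc a + 2 * Mc a) := by nlinarith
    refine ⟨by rw [hE0]; exact hRpos.le, ?_, ?_⟩
    · intro h
      rw [hE0] at h
      exact absurd h.symm (ne_of_gt hRpos)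
    · rintro ⟨α, p, hp, hak⟩
      exact absurd (by
        rw [show a = fun k => α * p ^ k from funext hak]
        exact geom_norm_summable hp) hA
end
end

section
/- For u sufficiently smooth in the Hardy space (e.g. u ∈ H^s_+ with s > 1/2), the following operator identity holds on L²_+: H_{Π(|u|²u)} = T_{|u|²} H_u + H_u T_{|u|²} − H_u³, where T_b(h)=Π(bh) is the Toeplitz operator and H_u(h)=Π(u·conj(h)) the Hankel operator. -/
noncomputable section

open scoped ComplexConjugate

/-- Hankel operator of symbol `u` on Fourier coefficients:
`(H_u h)^(k) = Σ_{ℓ≥0} û(k+ℓ) conj(ĥ(ℓ))`. -/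
def hankel (u : ℕ → ℂ) (h : ℕ → ℂ) : ℕ → ℂ :=
  fun k => ∑' ℓ : ℕ, u (k + ℓ) * conj (h ℓ)

/-- The Fourier coefficients (indexed by `ℤ`) of `|u|²` for `u` with nonnegative Fourier
coefficients `a` : for `n ≥ 0`, `(|u|²)^(n) = Σ_{ℓ≥0} û(ℓ+n) conj(û(ℓ))`, and
`(|u|²)^(-n) = conj((|u|²)^(n))`. -/
def sqModCoeff (a : ℕ → ℂ) : ℤ → ℂ :=
  fun n =>
    if 0 ≤ n then ∑' ℓ : ℕ, a (ℓ + n.toNat) * conj (a ℓ)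
    else conj (∑' ℓ : ℕ, a (ℓ + (-n).toNat) * conj (a ℓ))

/-- The Toeplitz operator `T_{|u|²}` on Fourier coefficients:
`(T_{|u|²} h)^(k) = Σ_{m≥0} (|u|²)^(k-m) ĥ(m)`. -/
def toepSq (a : ℕ → ℂ) (h : ℕ → ℂ) : ℕ → ℂ :=
  fun k => ∑' m : ℕ, sqModCoeff a ((k : ℤ) - (m : ℤ)) * h m

/-- Fourier coefficients of `Π(|u|²u)`: `(Π(|u|²u))^(k) = Σ_{m≥0} (|u|²)^(k-m) û(m)`. -/
def szegoCubic (a : ℕ → ℂ) : ℕ → ℂ := toepSq a a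

namespace Stmt3Aux

open Function

lemma summable_aux {E ι κ : Type*} [NormedAddCommGroup E] [CompleteSpace E]
    {f : ι → E} {g : κ → ℝ} (i : κ → ι)
    (hi : Injective i) (h0 : ∀ x ∉ Set.range i, f x = 0)
    (hb : ∀ y, ‖f (i y)‖ ≤ g y) (hg : Summable g) : Summable f :=
  (hi.summable_iff h0).mp (Summable.of_norm_bounded hg hb)

lemma sq_eq (a : ℕ → ℂ) (n : ℤ) :
    sqModCoeff a n =
      ∑' pq : ℕ × ℕ, (if (pq.1 : ℤ) = (pq.2 : ℤ) + n then a pq.1 * conj (a pq.2) else 0) := by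
  rcases le_or_gt 0 n with hn | hn
  · rw [sqModCoeff]
    rw [if_pos hn]
    have hinj : Injective (fun q : ℕ => ((q + n.toNat, q) : ℕ × ℕ)) := by
      intro x y hxy
      simpa using congrArg Prod.snd hxy
    rw [← hinj.tsum_eq (f := fun pq : ℕ × ℕ =>
        (if (pq.1 : ℤ) = (pq.2 : ℤ) + n then a pq.1 * conj (a pq.2) else 0))
      (by
        intro x hx
        have hcond : (x.1 : ℤ) = (x.2 : ℤ) + n := by
          by_contra hc
          exact hx (if_neg hc)
        refine ⟨x.2, ?_⟩
        obtain ⟨x1, x2⟩ := x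
        simp only [Prod.mk.injEq]
        exact ⟨by simp at hcond ⊢; omega, trivial⟩)]
    refine tsum_congr fun q => ?_
    rw [if_pos (by push_cast; omega)]
  · rw [sqModCoeff, if_neg (by omega)]
    rw [starRingEnd_apply, tsum_star]
    have hinj : Injective (fun q : ℕ => ((q, q + (-n).toNat) : ℕ × ℕ)) := by
      intro x y hxy
      simpa using congrArg Prod.fst hxy
    rw [← hinj.tsum_eq (f := fun pq : ℕ × ℕ =>
        (if (pq.1 : ℤ) = (pq.2 : ℤ) + n then a pq.1 * conj (a pq.2) else 0))
      (by
        intro x hx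
        have hcond : (x.1 : ℤ) = (x.2 : ℤ) + n := by
          by_contra hc
          exact hx (if_neg hc)
        refine ⟨x.1, ?_⟩
        obtain ⟨x1, x2⟩ := x
        simp only [Prod.mk.injEq]
        exact ⟨trivial, by simp at hcond ⊢; omega⟩)]
    refine tsum_congr fun q => ?_
    rw [if_pos (by omega)]
    simp only [starRingEnd_apply, star_mul', star_star]
    ring

lemma toep_eq (a b : ℕ → ℂ) {C : ℝ} (ha1 : Summable fun n => ‖a n‖)
    (hb : ∀ n, ‖b n‖ ≤ C) (hC0 : 0 ≤ C) (n : ℕ) :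
    toepSq a b n = ∑' t : ℕ × ℕ × ℕ,
      (if t.2.1 + t.1 = t.2.2 + n then a t.2.1 * conj (a t.2.2) * b t.1 else 0) := by
  have hD : Summable (fun pq : ℕ × ℕ => ‖a pq.1‖ * ‖a pq.2‖ * C) :=
    (ha1.mul_of_nonneg ha1 (fun _ => norm_nonneg _) (fun _ => norm_nonneg _)).mul_right C
  have hS : Summable (fun t : ℕ × ℕ × ℕ =>
      if t.2.1 + t.1 = t.2.2 + n then a t.2.1 * conj (a t.2.2) * b t.1 else 0) := by
    refine summable_aux (fun pq : ℕ × ℕ => ((pq.2 + n) - pq.1, pq.1, pq.2)) ?_ ?_ ?_ hD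
    · intro x y hxy
      have h1 := congrArg (fun z : ℕ × ℕ × ℕ => z.2.1) hxy
      have h2 := congrArg (fun z : ℕ × ℕ × ℕ => z.2.2) hxy
      simp at h1 h2
      exact Prod.ext h1 h2
    · intro t ht
      by_contra ht0
      apply ht
      have hcond : t.2.1 + t.1 = t.2.2 + n := by
        by_contra hc
        exact ht0 (if_neg hc)
      refine ⟨(t.2.1, t.2.2), ?_⟩
      obtain ⟨m, p, q⟩ := t
      simp only at hcond
      exact Prod.ext (show (q + n) - p = m by omega) rfl
    · intro pq
      dsimp only
      by_cases hc : pq.1 + ((pq.2 + n) - pq.1) = pq.2 + n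
      · rw [if_pos hc, norm_mul, norm_mul, starRingEnd_apply, norm_star]
        have h1 : 0 ≤ ‖a pq.1‖ * ‖a pq.2‖ := by positivity
        exact mul_le_mul_of_nonneg_left (hb _) h1
      · rw [if_neg hc]
        simp only [norm_zero]
        positivity
  rw [Summable.tsum_prod' hS (fun m => hS.prod_factor m)]
  simp only [toepSq]
  refine tsum_congr fun m => ?_
  rw [sq_eq a ((n : ℤ) - (m : ℤ)), ← tsum_mul_right]
  refine tsum_congr fun pq => ?_
  rw [ite_mul, zero_mul]
  exact if_congr (by omega) rfl rfl

lemma shifted_summable (a : ℕ → ℂ) (ha1 : Summable fun n => ‖a n‖) (m : ℕ) :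
    Summable fun ℓ => ‖a (m + ℓ)‖ :=
  ((summable_nat_add_iff m).mpr ha1).congr fun n => by rw [add_comm]

lemma hankel_bound (a b : ℕ → ℂ) {C : ℝ} (ha1 : Summable fun n => ‖a n‖)
    (hb : ∀ n, ‖b n‖ ≤ C) (hC0 : 0 ≤ C) (m : ℕ) :
    ‖hankel a b m‖ ≤ (∑' n, ‖a n‖) * C := by
  have hsh := shifted_summable a ha1 m
  have hbd : ∀ ℓ, ‖a (m + ℓ) * conj (b ℓ)‖ ≤ ‖a (m + ℓ)‖ * C := by
    intro ℓ
    rw [norm_mul, starRingEnd_apply, norm_star]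
    exact mul_le_mul_of_nonneg_left (hb ℓ) (norm_nonneg _)
  have hsummable : Summable fun ℓ => ‖a (m + ℓ) * conj (b ℓ)‖ :=
    Summable.of_nonneg_of_le (fun _ => norm_nonneg _) hbd (hsh.mul_right C)
  calc ‖hankel a b m‖ ≤ ∑' ℓ, ‖a (m + ℓ) * conj (b ℓ)‖ := norm_tsum_le_tsum_norm hsummable
    _ ≤ ∑' ℓ, ‖a (m + ℓ)‖ * C := Summable.tsum_le_tsum hbd hsummable (hsh.mul_right C)
    _ = (∑' ℓ, ‖a (m + ℓ)‖) * C := tsum_mul_right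
    _ ≤ (∑' n, ‖a n‖) * C := by
        refine mul_le_mul_of_nonneg_right ?_ hC0
        refine Summable.tsum_le_tsum_of_inj (fun ℓ => m + ℓ) (add_right_injective m)
          (fun c _ => norm_nonneg _) (fun ℓ => le_rfl) hsh ha1

lemma ell1 (a : ℕ → ℂ)
    (ha : ∃ s : ℝ, 1 / 2 < s ∧ Summable fun k : ℕ => (1 + (k : ℝ)) ^ (2 * s) * ‖a k‖ ^ 2) :
    Summable fun n => ‖a n‖ := by
  obtain ⟨s, hs, hsum⟩ := ha
  have hsm : Summable fun n : ℕ => (1 + (n : ℝ)) ^ (-(2 * s)) := by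
    have h1 : Summable fun n : ℕ => ((n : ℝ)) ^ (-(2 * s)) :=
      Real.summable_nat_rpow.mpr (by linarith)
    have h2 := (summable_nat_add_iff 1).mpr h1
    refine h2.congr fun n => ?_
    push_cast
    rw [add_comm]
  refine Summable.of_nonneg_of_le (fun n => norm_nonneg _) (fun n => ?_) (hsm.add hsum)
  have h1 : (0 : ℝ) < 1 + n := by positivity
  have e1 : (1 + (n : ℝ)) ^ (-(2 * s)) = ((1 + (n : ℝ)) ^ s)⁻¹ * ((1 + (n : ℝ)) ^ s)⁻¹ := by
    rw [show -(2 * s) = (-s) + (-s) by ring, Real.rpow_add h1, Real.rpow_neg h1.le]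
  have e2 : (1 + (n : ℝ)) ^ (2 * s) = (1 + (n : ℝ)) ^ s * (1 + (n : ℝ)) ^ s := by
    rw [show 2 * s = s + s by ring, Real.rpow_add h1]
  have hP : (0 : ℝ) < (1 + (n : ℝ)) ^ s := Real.rpow_pos_of_pos h1 s
  set P := (1 + (n : ℝ)) ^ s with hPdef
  rw [e1, e2]
  have hPP : P * P⁻¹ = 1 := mul_inv_cancel₀ (ne_of_gt hP)
  nlinarith [sq_nonneg (P⁻¹ - P * ‖a n‖), norm_nonneg (a n), hP,
    mul_pos hP hP, sq_nonneg (‖a n‖)]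

def FF (a h : ℕ → ℂ) (k : ℕ) (x : ℕ × ℕ × ℕ × ℕ) : ℂ :=
  if x.2.2.1 + x.2.1 = x.2.2.2 + x.1 + k then
    a x.2.2.1 * a x.2.1 * conj (a x.2.2.2) * conj (h x.1) else 0

lemma normFF_summable (a h : ℕ → ℂ) (k : ℕ) {C : ℝ} (ha1 : Summable fun n => ‖a n‖)
    (hC : ∀ n, ‖h n‖ ≤ C) (hC0 : 0 ≤ C) :
    Summable fun x => ‖FF a h k x‖ := by
  have hD : Summable (fun t : ℕ × ℕ × ℕ => ‖a t.1‖ * (‖a t.2.1‖ * ‖a t.2.2‖) * C) :=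
    (ha1.mul_of_nonneg
      (ha1.mul_of_nonneg ha1 (fun _ => norm_nonneg _) (fun _ => norm_nonneg _))
      (fun _ => norm_nonneg _) (fun t => by positivity)).mul_right C
  refine summable_aux
    (fun t : ℕ × ℕ × ℕ => (((t.2.1 + t.1) - (t.2.2 + k), t.1, t.2.1, t.2.2) : ℕ × ℕ × ℕ × ℕ))
    ?_ ?_ ?_ hD
  · intro x y hxy
    have h2 := congrArg (fun z : ℕ × ℕ × ℕ × ℕ => z.2) hxy
    simpa using h2
  · intro x hx
    obtain ⟨l, m, p, q⟩ := x
    by_contra hne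
    have hFF : FF a h k (l, m, p, q) ≠ 0 := fun h0 => hne (by simp [h0])
    have hcond : p + m = q + l + k := by
      by_contra hc
      exact hFF (if_neg hc)
    exact absurd ⟨(m, p, q), Prod.ext (by simp; omega) rfl⟩ hx
  · intro t
    obtain ⟨m, p, q⟩ := t
    dsimp only
    rw [norm_norm, FF]
    by_cases hc : p + m = q + ((p + m) - (q + k)) + k
    · rw [if_pos hc]
      rw [norm_mul, norm_mul, norm_mul, starRingEnd_apply, starRingEnd_apply,
        norm_star, norm_star]
      have he : ‖a p‖ * ‖a m‖ * ‖a q‖ * ‖h ((p + m) - (q + k))‖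
          = ‖a m‖ * (‖a p‖ * ‖a q‖) * ‖h ((p + m) - (q + k))‖ := by ring
      rw [he]
      exact mul_le_mul_of_nonneg_left (hC _) (by positivity)
    · rw [if_neg hc, norm_zero]
      positivity

lemma restrict_summable (a h : ℕ → ℂ) (k : ℕ) {C : ℝ} (ha1 : Summable fun n => ‖a n‖)
    (hC : ∀ n, ‖h n‖ ≤ C) (hC0 : 0 ≤ C) (P : ℕ × ℕ × ℕ × ℕ → Prop) [DecidablePred P] :
    Summable fun x => if P x then FF a h k x else 0 := by
  refine Summable.of_norm_bounded (normFF_summable a h k ha1 hC hC0) fun x => ?_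
  by_cases hP : P x <;> simp [hP]

lemma claim1 (a h : ℕ → ℂ) (k : ℕ) {Ca : ℝ} (ha1 : Summable fun n => ‖a n‖)
    (haC : ∀ n, ‖a n‖ ≤ Ca) (haC0 : 0 ≤ Ca) (hFF : Summable (FF a h k)) :
    hankel (szegoCubic a) h k = ∑' x, FF a h k x := by
  rw [Summable.tsum_prod' hFF (fun ℓ => hFF.prod_factor ℓ)]
  simp only [hankel]
  refine tsum_congr fun ℓ => ?_
  rw [szegoCubic, toep_eq a a ha1 haC haC0 (k + ℓ), ← tsum_mul_right]
  refine tsum_congr fun t => ?_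
  rw [ite_mul, zero_mul]
  simp only [FF]
  exact if_congr (by omega) (by ring) rfl

lemma claim2 (a h : ℕ → ℂ) (k : ℕ) {Ch : ℝ} (ha1 : Summable fun n => ‖a n‖)
    (hhC : ∀ n, ‖h n‖ ≤ Ch) (hCh0 : 0 ≤ Ch)
    (hS1 : Summable fun x : ℕ × ℕ × ℕ × ℕ => if x.1 ≤ x.2.1 then FF a h k x else 0) :
    toepSq a (hankel a h) k = ∑' x, (if x.1 ≤ x.2.1 then FF a h k x else 0) := by
  have hbH : ∀ n, ‖hankel a h n‖ ≤ (∑' n, ‖a n‖) * Ch := hankel_bound a h ha1 hhC hCh0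
  have hCa0 : 0 ≤ (∑' n, ‖a n‖) * Ch :=
    mul_nonneg (tsum_nonneg fun _ => norm_nonneg _) hCh0
  rw [toep_eq a (hankel a h) ha1 hbH hCa0 k]
  have hinj : Function.Injective
      (fun y : (ℕ × ℕ × ℕ) × ℕ => ((y.2, y.1.1 + y.2, y.1.2.1, y.1.2.2) : ℕ × ℕ × ℕ × ℕ)) := by
    intro x y hxy
    obtain ⟨⟨m, p, q⟩, l⟩ := x
    obtain ⟨⟨m', p', q'⟩, l'⟩ := y
    simp only [Prod.mk.injEq] at hxy ⊢
    omega
  have hsupp : Function.support (fun x : ℕ × ℕ × ℕ × ℕ => if x.1 ≤ x.2.1 then FF a h k x else 0)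
      ⊆ Set.range (fun y : (ℕ × ℕ × ℕ) × ℕ => ((y.2, y.1.1 + y.2, y.1.2.1, y.1.2.2) : ℕ × ℕ × ℕ × ℕ)) := by
    intro x hx
    obtain ⟨l, m, p, q⟩ := x
    have h1 : l ≤ m := by
      by_contra hc
      exact hx (if_neg hc)
    exact ⟨((m - l, p, q), l), by simp only [Prod.mk.injEq, true_and, and_true]; omega⟩
  rw [← hinj.tsum_eq hsupp]
  have hSe := hS1.comp_injective hinj
  simp only [Function.comp_def] at hSe
  rw [Summable.tsum_prod' hSe (fun t => hSe.prod_factor t)]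
  refine tsum_congr fun t => ?_
  obtain ⟨m, p, q⟩ := t
  dsimp only
  by_cases hc : p + m = q + k
  · rw [if_pos hc]
    simp only [hankel]
    rw [← tsum_mul_left]
    refine tsum_congr fun l => ?_
    simp only [FF]
    rw [if_pos (by omega), if_pos (by omega)]
    ring
  · rw [if_neg hc]
    symm
    refine (tsum_congr fun l => ?_).trans tsum_zero
    simp only [FF]
    rw [if_pos (by omega), if_neg (by omega)]

lemma claim3 (a h : ℕ → ℂ) (k : ℕ) {Ch : ℝ} (ha1 : Summable fun n => ‖a n‖)
    (hhC : ∀ n, ‖h n‖ ≤ Ch) (hCh0 : 0 ≤ Ch)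
    (hS2 : Summable fun x : ℕ × ℕ × ℕ × ℕ => if k ≤ x.2.2.1 then FF a h k x else 0) :
    hankel a (toepSq a h) k = ∑' x, (if k ≤ x.2.2.1 then FF a h k x else 0) := by
  have hinj : Function.Injective
      (fun y : ℕ × ℕ × ℕ × ℕ => ((y.2.1, y.2.2.2, k + y.1, y.2.2.1) : ℕ × ℕ × ℕ × ℕ)) := by
    intro x y hxy
    obtain ⟨l, m, p, q⟩ := x
    obtain ⟨l', m', p', q'⟩ := y
    simp only [Prod.mk.injEq] at hxy ⊢
    omega
  have hsupp : Function.support (fun x : ℕ × ℕ × ℕ × ℕ => if k ≤ x.2.2.1 then FF a h k x else 0)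
      ⊆ Set.range (fun y : ℕ × ℕ × ℕ × ℕ => ((y.2.1, y.2.2.2, k + y.1, y.2.2.1) : ℕ × ℕ × ℕ × ℕ)) := by
    intro x hx
    obtain ⟨l, m, p, q⟩ := x
    have h1 : k ≤ p := by
      by_contra hc
      exact hx (if_neg hc)
    exact ⟨(p - k, l, q, m), by simp only [Prod.mk.injEq, true_and, and_true]; omega⟩
  rw [← hinj.tsum_eq hsupp]
  have hSe := hS2.comp_injective hinj
  simp only [Function.comp_def] at hSe
  rw [Summable.tsum_prod' hSe (fun t => hSe.prod_factor t)]
  simp only [hankel]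
  refine tsum_congr fun l => ?_
  rw [toep_eq a h ha1 hhC hCh0 l, starRingEnd_apply, tsum_star, ← tsum_mul_left]
  refine tsum_congr fun t => ?_
  obtain ⟨m, p', q'⟩ := t
  dsimp only
  simp only [FF]
  by_cases hc : p' + m = q' + l
  · rw [if_pos hc, if_pos (show k ≤ k + l by omega),
      if_pos (show k + l + q' = p' + m + k by omega)]
    simp only [starRingEnd_apply, star_mul', star_star]
    ring
  · rw [if_neg hc, if_pos (show k ≤ k + l by omega),
      if_neg (show ¬(k + l + q' = p' + m + k) by omega)]
    simp

lemma claim4 (a h : ℕ → ℂ) (k : ℕ)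
    (hS3 : Summable fun x : ℕ × ℕ × ℕ × ℕ =>
      if k ≤ x.2.2.1 ∧ x.1 ≤ x.2.1 then FF a h k x else 0) :
    hankel a (hankel a (hankel a h)) k
      = ∑' x, (if k ≤ x.2.2.1 ∧ x.1 ≤ x.2.1 then FF a h k x else 0) := by
  have hinj : Function.Injective
      (fun y : ℕ × ℕ × ℕ => ((y.2.2, y.2.1 + y.2.2, k + y.1, y.1 + y.2.1) : ℕ × ℕ × ℕ × ℕ)) := by
    intro x y hxy
    obtain ⟨l1, l2, l3⟩ := x
    obtain ⟨l1', l2', l3'⟩ := y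
    simp only [Prod.mk.injEq] at hxy ⊢
    omega
  have hsupp : Function.support
      (fun x : ℕ × ℕ × ℕ × ℕ => if k ≤ x.2.2.1 ∧ x.1 ≤ x.2.1 then FF a h k x else 0)
      ⊆ Set.range (fun y : ℕ × ℕ × ℕ =>
        ((y.2.2, y.2.1 + y.2.2, k + y.1, y.1 + y.2.1) : ℕ × ℕ × ℕ × ℕ)) := by
    intro x hx
    obtain ⟨l, m, p, q⟩ := x
    have h1 : k ≤ p ∧ l ≤ m := by
      by_contra hc
      exact hx (if_neg hc)
    have hFF : FF a h k (l, m, p, q) ≠ 0 := by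
      intro h0
      exact hx (by simp [h0])
    have hcond : p + m = q + l + k := by
      by_contra hc
      exact hFF (if_neg hc)
    exact ⟨(p - k, m - l, l), by simp only [Prod.mk.injEq, true_and, and_true]; omega⟩
  rw [← hinj.tsum_eq hsupp]
  have hSe := hS3.comp_injective hinj
  simp only [Function.comp_def] at hSe
  rw [Summable.tsum_prod' hSe (fun l1 => hSe.prod_factor l1)]
  simp only [hankel]
  refine tsum_congr fun l1 => ?_
  have hSe2 := hSe.prod_factor l1
  rw [Summable.tsum_prod' hSe2 (fun l2 => hSe2.prod_factor l2)]
  rw [starRingEnd_apply, tsum_star, ← tsum_mul_left]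
  refine tsum_congr fun l2 => ?_
  rw [star_mul', starRingEnd_apply, star_star, ← tsum_mul_left, ← tsum_mul_left]
  refine tsum_congr fun l3 => ?_
  dsimp only
  simp only [FF]
  rw [if_pos (by omega), if_pos (by omega)]
  simp only [starRingEnd_apply]
  ring

end Stmt3Aux

/-- For `u ∈ H^s_+`, `s > 1/2`, the operator identity
`H_{Π(|u|²u)} = T_{|u|²} H_u + H_u T_{|u|²} − H_u³` holds on `L²_+`. -/
theorem stmt3 (a : ℕ → ℂ)
    (ha : ∃ s : ℝ, 1 / 2 < s ∧ Summable fun k : ℕ => (1 + (k : ℝ)) ^ (2 * s) * ‖a k‖ ^ 2)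
    (h : ℕ → ℂ) (hh : Summable fun k : ℕ => ‖h k‖ ^ 2) :
    ∀ k : ℕ,
      hankel (szegoCubic a) h k =
        toepSq a (hankel a h) k + hankel a (toepSq a h) k
          - hankel a (hankel a (hankel a h)) k := by
  have ha1 : Summable fun n => ‖a n‖ := Stmt3Aux.ell1 a ha
  have hCh : ∀ n, ‖h n‖ ≤ Real.sqrt (∑' j, ‖h j‖ ^ 2) := by
    intro n
    have h1 : ‖h n‖ ^ 2 ≤ ∑' j, ‖h j‖ ^ 2 := Summable.le_tsum hh n fun j _ => sq_nonneg _
    have h2 := Real.sqrt_le_sqrt h1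
    rwa [Real.sqrt_sq (norm_nonneg _)] at h2
  have hCh0 : 0 ≤ Real.sqrt (∑' j, ‖h j‖ ^ 2) := Real.sqrt_nonneg _
  have haC : ∀ n, ‖a n‖ ≤ ∑' n, ‖a n‖ := fun n => Summable.le_tsum ha1 n fun j _ => norm_nonneg _
  have haC0 : (0 : ℝ) ≤ ∑' n, ‖a n‖ := tsum_nonneg fun _ => norm_nonneg _
  intro k
  have hN := Stmt3Aux.normFF_summable a h k ha1 hCh hCh0
  have hFF : Summable (Stmt3Aux.FF a h k) := hN.of_norm
  have hS1 : Summable fun x : ℕ × ℕ × ℕ × ℕ =>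
      if x.1 ≤ x.2.1 then Stmt3Aux.FF a h k x else 0 :=
    Stmt3Aux.restrict_summable a h k ha1 hCh hCh0 _
  have hS2 : Summable fun x : ℕ × ℕ × ℕ × ℕ =>
      if k ≤ x.2.2.1 then Stmt3Aux.FF a h k x else 0 :=
    Stmt3Aux.restrict_summable a h k ha1 hCh hCh0 _
  have hS3 : Summable fun x : ℕ × ℕ × ℕ × ℕ =>
      if k ≤ x.2.2.1 ∧ x.1 ≤ x.2.1 then Stmt3Aux.FF a h k x else 0 :=
    Stmt3Aux.restrict_summable a h k ha1 hCh hCh0 _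
  rw [Stmt3Aux.claim1 a h k ha1 haC haC0 hFF,
    Stmt3Aux.claim2 a h k ha1 hCh hCh0 hS1,
    Stmt3Aux.claim3 a h k ha1 hCh hCh0 hS2,
    Stmt3Aux.claim4 a h k hS3,
    ← Summable.tsum_add hS1 hS2, ← Summable.tsum_sub (hS1.add hS2) hS3]
  refine tsum_congr fun x => ?_
  obtain ⟨l, m, p, q⟩ := x
  dsimp only
  by_cases h1 : l ≤ m <;> by_cases h2 : k ≤ p
  · rw [if_pos h1, if_pos h2, if_pos ⟨h2, h1⟩]; ring
  · rw [if_pos h1, if_neg h2, if_neg (fun hc => h2 hc.1)]; ring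
  · rw [if_neg h1, if_pos h2, if_neg (fun hc => h1 hc.2)]; ring
  · rw [if_neg h1, if_neg h2, if_neg (fun hc => h2 hc.1)]
    show Stmt3Aux.FF a h k (l, m, p, q) = 0 + 0 - 0
    rw [Stmt3Aux.FF, if_neg (show ¬(p + m = q + l + k) by omega)]
    ring
end
end

section
/- For all u, a, h in the Hardy space with u, a sufficiently smooth (e.g. in H^s_+, s>1/2), the Hankel operator of symbol a·H_u(a) satisfies H_{a H_u(a)}(h) = H_u(a)·H_a(h) + H_u(a·Π(conj(a) h) − ⟨h, a⟩ a). -/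
noncomputable section

open scoped ComplexConjugate

/-- Cauchy product: Fourier coefficients of the product of two Hardy functions. -/
def mulCoeff (f g : ℕ → ℂ) : ℕ → ℂ :=
  fun k => ∑ i ∈ Finset.range (k + 1), f i * g (k - i)

/-- Fourier coefficients of `Π(conj(a)·h)`:
`(Π(conj a · h))^(n) = Σ_{k≥0} conj(â(k)) ĥ(k+n)`. -/
def piConjMul (a h : ℕ → ℂ) : ℕ → ℂ :=
  fun n => ∑' k : ℕ, conj (a k) * h (k + n)

/-- The `L²` inner product `⟨h, a⟩ = Σ_{k≥0} ĥ(k) conj(â(k))`. -/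
def ip (h a : ℕ → ℂ) : ℂ := ∑' k : ℕ, h k * conj (a k)

/-! ### Auxiliary material -/

set_option maxHeartbeats 1000000 in
private lemma sum_shift_summable {ι : Type*} (f : ι → ℝ) (g : ℕ → ℝ) (c : ι → ℕ)
    (hf : Summable f) (hg : Summable g) (hf0 : ∀ x, 0 ≤ f x) (hg0 : ∀ n, 0 ≤ g n) :
    Summable (fun x : ι × ℕ => f x.1 * g (x.2 + c x.1)) := by
  have h0 : 0 ≤ fun x : ι × ℕ => f x.1 * g (x.2 + c x.1) :=
    fun x => mul_nonneg (hf0 _) (hg0 _)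
  refine (summable_prod_of_nonneg h0).2 ⟨fun x => ?_, ?_⟩
  · show Summable fun y : ℕ => f x * g (y + c x)
    exact ((summable_nat_add_iff (c x)).2 hg).mul_left _
  · show Summable fun x : ι => ∑' y : ℕ, f x * g (y + c x)
    refine Summable.of_nonneg_of_le
      (fun x => tsum_nonneg fun y => mul_nonneg (hf0 _) (hg0 _))
      (fun x => ?_) (hf.mul_right (∑' n, g n))
    rw [tsum_mul_left]
    refine mul_le_mul_of_nonneg_left ?_ (hf0 x)
    exact Summable.tsum_le_tsum_of_inj (fun y => y + c x) (add_left_injective (c x)) (fun n _ => hg0 n)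
      (fun y => le_rfl) ((summable_nat_add_iff (c x)).2 hg) hg

private lemma l1_of_smooth (u : ℕ → ℂ)
    (hu : ∃ s : ℝ, 1 / 2 < s ∧ Summable fun k : ℕ => (1 + (k : ℝ)) ^ (2 * s) * ‖u k‖ ^ 2) :
    Summable fun k : ℕ => ‖u k‖ := by
  obtain ⟨s, hs, hsum⟩ := hu
  have hpos : ∀ k : ℕ, (0:ℝ) < 1 + k := fun k => by positivity
  have hinv : Summable fun k : ℕ => ((1:ℝ) + k) ^ (-(2*s)) := by
    have h1 : Summable fun n : ℕ => 1 / (n:ℝ) ^ (2*s) :=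
      Real.summable_one_div_nat_rpow.2 (by linarith)
    have h2 := (summable_nat_add_iff 1).2 h1
    refine h2.congr fun n => ?_
    rw [Real.rpow_neg (le_of_lt (hpos n)), ← one_div]
    norm_num
    rw [show ((n:ℝ) + 1) = (1:ℝ) + n by ring]
  refine Summable.of_nonneg_of_le (fun k => norm_nonneg _)
    (fun k => ?_) ((hsum.add hinv).div_const 2)
  have hk := hpos k
  have e1 : ((1:ℝ)+k) ^ s * ((1:ℝ)+k) ^ s = ((1:ℝ)+k) ^ (2*s) := by
    rw [← Real.rpow_add hk]; ring_nf
  have e2 : ((1:ℝ)+k) ^ (-s) * ((1:ℝ)+k) ^ (-s) = ((1:ℝ)+k) ^ (-(2*s)) := by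
    rw [← Real.rpow_add hk]; ring_nf
  have e3 : ((1:ℝ)+k) ^ s * ((1:ℝ)+k) ^ (-s) = 1 := by
    rw [← Real.rpow_add hk]; norm_num
  have h2 := two_mul_le_add_sq (((1:ℝ)+k) ^ s * ‖u k‖) (((1:ℝ)+k) ^ (-s))
  have key : 2 * ‖u k‖ ≤ ((1:ℝ)+k) ^ (2*s) * ‖u k‖ ^ 2 + ((1:ℝ)+k) ^ (-(2*s)) := by
    calc 2 * ‖u k‖ = 2 * (((1:ℝ)+k) ^ s * ((1:ℝ)+k) ^ (-s)) * ‖u k‖ := by rw [e3]; ring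
    _ = 2 * (((1:ℝ)+k) ^ s * ‖u k‖) * (((1:ℝ)+k) ^ (-s)) := by ring
    _ ≤ (((1:ℝ)+k) ^ s * ‖u k‖) ^ 2 + (((1:ℝ)+k) ^ (-s)) ^ 2 := h2
    _ = ((1:ℝ)+k) ^ (2*s) * ‖u k‖ ^ 2 + ((1:ℝ)+k) ^ (-(2*s)) := by
        rw [mul_pow, ← e1, ← e2]; ring
  linarith

private lemma bdd_of_l2 (h : ℕ → ℂ) (hh : Summable fun k : ℕ => ‖h k‖ ^ 2) (ℓ : ℕ) :
    ‖h ℓ‖ ≤ Real.sqrt (∑' k, ‖h k‖ ^ 2) := by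
  have h1 : ‖h ℓ‖ ^ 2 ≤ ∑' k, ‖h k‖ ^ 2 := Summable.le_tsum hh ℓ (fun j _ => sq_nonneg _)
  have h2 := Real.sqrt_le_sqrt h1
  rwa [Real.sqrt_sq (norm_nonneg _)] at h2

private lemma hankel_norm_le (u a : ℕ → ℂ) (Su : Summable fun n => ‖u n‖)
    (Sa : Summable fun n => ‖a n‖) (j : ℕ) :
    ‖hankel u a j‖ ≤ (∑' n, ‖u n‖) * (∑' n, ‖a n‖) := by
  have hUb : ∀ n, ‖u n‖ ≤ ∑' n, ‖u n‖ := fun n => Summable.le_tsum Su n fun _ _ => norm_nonneg _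
  have hsm : Summable fun m => ‖u (j + m) * conj (a m)‖ := by
    refine Summable.of_nonneg_of_le (fun m => norm_nonneg _) (fun m => ?_)
      (Sa.mul_left (∑' n, ‖u n‖))
    rw [norm_mul, RCLike.norm_conj]
    exact mul_le_mul_of_nonneg_right (hUb _) (norm_nonneg _)
  refine (norm_tsum_le_tsum_norm hsm).trans ?_
  rw [← tsum_mul_left]
  refine Summable.tsum_le_tsum (fun m => ?_) hsm (Sa.mul_left _)
  rw [norm_mul, RCLike.norm_conj]
  exact mul_le_mul_of_nonneg_right (hUb _) (norm_nonneg _)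

/-- The triple-sum kernel appearing in the "lower triangular" part of the product. -/
private def FF (u a h : ℕ → ℂ) (k : ℕ) : ℕ × ℕ × ℕ → ℂ := fun x =>
  if x.2.1 < x.1 then
    a x.2.1 * (u (k + x.1 - x.2.1 + x.2.2) * conj (a x.2.2)) * conj (h x.1)
  else 0

/-- The same kernel, reparametrized as it appears in `H_u(aΠ(conj a h) - ⟨h,a⟩a)`. -/
private def GG (u a h : ℕ → ℂ) (k : ℕ) : ℕ × ℕ × ℕ → ℂ := fun x =>
  if x.2.1 < x.1 then
    (u (k + x.1) * conj (a x.2.1)) * (a x.2.2 * conj (h (x.2.2 + (x.1 - x.2.1))))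
  else 0

private def ψ : ℕ × ℕ × ℕ → ℕ × ℕ × ℕ := fun x => (x.1 + x.2.1 + 1, x.1, x.2.2)

private lemma ψ_inj : Function.Injective ψ := by
  rintro ⟨a1, a2, a3⟩ ⟨b1, b2, b3⟩ hab
  simp only [ψ, Prod.mk.injEq] at hab
  simp only [Prod.mk.injEq]
  omega

private lemma ψ_range {x : ℕ × ℕ × ℕ} (hx : x.2.1 < x.1) : x ∈ Set.range ψ := by
  obtain ⟨x1, x2, x3⟩ := x
  have hx' : x2 < x1 := hx
  refine ⟨(x2, x1 - x2 - 1, x3), ?_⟩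
  show (x2 + (x1 - x2 - 1) + 1, x2, x3) = (x1, x2, x3)
  have : x2 + (x1 - x2 - 1) + 1 = x1 := by omega
  rw [this]

/-- For `u, a` sufficiently smooth Hardy functions and `h ∈ L²_+`:
`H_{a·H_u(a)}(h) = H_u(a)·H_a(h) + H_u(a·Π(conj(a)h) − ⟨h,a⟩a)`. -/
theorem stmt6 (u a h : ℕ → ℂ)
    (hu : ∃ s : ℝ, 1 / 2 < s ∧ Summable fun k : ℕ => (1 + (k : ℝ)) ^ (2 * s) * ‖u k‖ ^ 2)
    (ha : ∃ s : ℝ, 1 / 2 < s ∧ Summable fun k : ℕ => (1 + (k : ℝ)) ^ (2 * s) * ‖a k‖ ^ 2)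
    (hh : Summable fun k : ℕ => ‖h k‖ ^ 2) :
    ∀ k : ℕ,
      hankel (mulCoeff a (hankel u a)) h k =
        mulCoeff (hankel u a) (hankel a h) k +
          hankel u (fun n => mulCoeff a (piConjMul a h) n - ip h a * a n) k := by
  intro k
  have Su : Summable fun n => ‖u n‖ := l1_of_smooth u hu
  have Sa : Summable fun n => ‖a n‖ := l1_of_smooth a ha
  set C : ℝ := Real.sqrt (∑' n, ‖h n‖ ^ 2) with hCdef
  have hC : ∀ ℓ, ‖h ℓ‖ ≤ C := fun ℓ => bdd_of_l2 h hh ℓ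
  have hC0 : (0:ℝ) ≤ C := Real.sqrt_nonneg _
  set M : ℝ := (∑' n, ‖u n‖) * (∑' n, ‖a n‖) with hMdef
  have hHle : ∀ j, ‖hankel u a j‖ ≤ M := fun j => hankel_norm_le u a Su Sa j
  have hM0 : (0:ℝ) ≤ M :=
    mul_nonneg (tsum_nonneg fun _ => norm_nonneg _) (tsum_nonneg fun _ => norm_nonneg _)
  -- summability of the dominating kernels
  have bsum : ∀ c : ℕ × ℕ → ℕ, Summable fun x : ℕ × ℕ × ℕ =>
      (C * (‖a x.1‖ * ‖a x.2.2‖)) * ‖u (x.2.1 + c (x.1, x.2.2))‖ := by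
    intro c
    have hf : Summable fun p : ℕ × ℕ => C * (‖a p.1‖ * ‖a p.2‖) :=
      (Summable.mul_of_nonneg Sa Sa (fun _ => norm_nonneg _) (fun _ => norm_nonneg _)).mul_left C
    have hS := sum_shift_summable (fun p : ℕ × ℕ => C * (‖a p.1‖ * ‖a p.2‖))
      (fun n => ‖u n‖) c hf Su
      (fun p => mul_nonneg hC0 (mul_nonneg (norm_nonneg _) (norm_nonneg _)))
      (fun n => norm_nonneg _)
    let e : ℕ × ℕ × ℕ ≃ (ℕ × ℕ) × ℕ :=
      ⟨fun x => ((x.1, x.2.2), x.2.1), fun y => (y.1.1, y.2, y.1.2), fun x => rfl, fun y => rfl⟩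
    exact ((e.summable_iff).2 hS).congr fun x => rfl
  -- norm-summability of FF
  have SFn : Summable fun x : ℕ × ℕ × ℕ => ‖FF u a h k x‖ := by
    refine (ψ_inj.summable_iff (fun x hx => ?_)).1 ?_
    · by_cases hlt : x.2.1 < x.1
      · exact absurd (ψ_range hlt) hx
      · simp [FF, hlt]
    · refine Summable.of_nonneg_of_le (fun x => norm_nonneg _) (fun x => ?_)
        (bsum fun p => k + p.2 + 1)
      obtain ⟨i, t, m⟩ := x
      have hcond : i < i + t + 1 := by omega
      have hidx : k + (i + t + 1) - i + m = t + (k + m + 1) := by omega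
      show ‖FF u a h k (i + t + 1, i, m)‖ ≤ _
      simp only [FF, if_pos hcond, hidx, norm_mul, RCLike.norm_conj]
      have hb : ‖a i‖ * (‖u (t + (k + m + 1))‖ * ‖a m‖) * ‖h (i + t + 1)‖
          ≤ ‖a i‖ * (‖u (t + (k + m + 1))‖ * ‖a m‖) * C :=
        mul_le_mul_of_nonneg_left (hC _) (by positivity)
      exact hb.trans_eq (by ring)
  have SF : Summable (FF u a h k) := SFn.of_norm
  -- norm-summability of GG
  have SGn : Summable fun x : ℕ × ℕ × ℕ => ‖GG u a h k x‖ := by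
    refine (ψ_inj.summable_iff (fun x hx => ?_)).1 ?_
    · by_cases hlt : x.2.1 < x.1
      · exact absurd (ψ_range hlt) hx
      · simp [GG, hlt]
    · refine Summable.of_nonneg_of_le (fun x => norm_nonneg _) (fun x => ?_)
        (bsum fun p => k + p.1 + 1)
      obtain ⟨j, t, m⟩ := x
      have hcond : j < j + t + 1 := by omega
      have hidx : k + (j + t + 1) = t + (k + j + 1) := by omega
      have hidx2 : j + t + 1 - j = t + 1 := by omega
      show ‖GG u a h k (j + t + 1, j, m)‖ ≤ _
      simp only [GG, if_pos hcond, hidx, hidx2, norm_mul, RCLike.norm_conj]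
      have hb : ‖u (t + (k + j + 1))‖ * ‖a j‖ * (‖a m‖ * ‖h (m + (t + 1))‖)
          ≤ ‖u (t + (k + j + 1))‖ * ‖a j‖ * (‖a m‖ * C) := by
        refine mul_le_mul_of_nonneg_left ?_ (by positivity)
        exact mul_le_mul_of_nonneg_left (hC _) (norm_nonneg _)
      exact hb.trans_eq (by ring)
  have SG : Summable (GG u a h k) := SGn.of_norm
  -- slice summability
  have SFslice : ∀ ℓ, Summable fun q : ℕ × ℕ => FF u a h k (ℓ, q) := fun ℓ => SF.prod_factor ℓ
  have SFslice2 : ∀ ℓ i, Summable fun m => FF u a h k (ℓ, i, m) :=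
    fun ℓ i => (SFslice ℓ).prod_factor i
  have SGslice : ∀ L, Summable fun q : ℕ × ℕ => GG u a h k (L, q) := fun L => SG.prod_factor L
  have SGslice2 : ∀ L j, Summable fun m => GG u a h k (L, j, m) :=
    fun L j => (SGslice L).prod_factor j
  -- summability of the two pieces in ℓ
  have h0F : 0 ≤ fun x : ℕ × (ℕ × ℕ) => ‖FF u a h k x‖ := fun x => norm_nonneg _
  have houter := ((summable_prod_of_nonneg h0F).1 SFn).2
  have hslice_norm := ((summable_prod_of_nonneg h0F).1 SFn).1
  have SB : Summable fun ℓ => ∑' q : ℕ × ℕ, FF u a h k (ℓ, q) :=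
    Summable.of_norm_bounded houter fun ℓ => norm_tsum_le_tsum_norm (hslice_norm ℓ)
  have SAt : ∀ t : ℕ, Summable fun ℓ => a (ℓ + t) * hankel u a (k - t) * conj (h ℓ) := by
    intro t
    refine Summable.of_norm_bounded
      ((((summable_nat_add_iff t).2 Sa).mul_left (M * C))) fun ℓ => ?_
    rw [norm_mul, norm_mul, RCLike.norm_conj]
    calc ‖a (ℓ + t)‖ * ‖hankel u a (k - t)‖ * ‖h ℓ‖
        = ‖a (ℓ + t)‖ * (‖hankel u a (k - t)‖ * ‖h ℓ‖) := by ring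
      _ ≤ ‖a (ℓ + t)‖ * (M * C) :=
          mul_le_mul_of_nonneg_left
            (mul_le_mul (hHle _) (hC _) (norm_nonneg _) hM0) (norm_nonneg _)
      _ = M * C * ‖a (ℓ + t)‖ := by ring
  have SA : Summable fun ℓ => ∑ t ∈ Finset.range (k + 1),
      a (ℓ + t) * hankel u a (k - t) * conj (h ℓ) :=
    summable_sum fun t _ => SAt t
  -- Step 1: split the left-hand side
  have hsplit : ∀ ℓ : ℕ, mulCoeff a (hankel u a) (k + ℓ) * conj (h ℓ)
      = (∑' q : ℕ × ℕ, FF u a h k (ℓ, q)) +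
        ∑ t ∈ Finset.range (k + 1), a (ℓ + t) * hankel u a (k - t) * conj (h ℓ) := by
    intro ℓ
    have e0 : mulCoeff a (hankel u a) (k + ℓ) * conj (h ℓ)
        = ∑ i ∈ Finset.range (k + ℓ + 1), a i * hankel u a (k + ℓ - i) * conj (h ℓ) := by
      rw [show mulCoeff a (hankel u a) (k + ℓ)
        = ∑ i ∈ Finset.range (k + ℓ + 1), a i * hankel u a (k + ℓ - i) from rfl,
        Finset.sum_mul]
    rw [e0, show k + ℓ + 1 = ℓ + (k + 1) from by omega, Finset.sum_range_add]
    congr 1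
    · -- lower-triangular part equals the FF-slice sum
      rw [Summable.tsum_prod' (SFslice ℓ) (SFslice2 ℓ)]
      rw [tsum_eq_sum (s := Finset.range ℓ) (fun i hi => by
        have hi' : ¬ i < ℓ := by simpa using hi
        simp [FF, hi'])]
      refine Finset.sum_congr rfl fun i hi => ?_
      have hi' : i < ℓ := Finset.mem_range.1 hi
      have hterm : ∀ m, FF u a h k (ℓ, i, m)
          = (a i * conj (h ℓ)) * (u (k + ℓ - i + m) * conj (a m)) := by
        intro m; simp only [FF, if_pos hi']; ring
      rw [tsum_congr hterm, tsum_mul_left]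
      rw [show hankel u a (k + ℓ - i) = ∑' m, u (k + ℓ - i + m) * conj (a m) from rfl]
      ring
    · refine Finset.sum_congr rfl fun t ht => ?_
      rw [show k + ℓ - (ℓ + t) = k - t from by omega]
  -- Step 2: the second piece is the first term of the RHS
  have hA : (∑' ℓ, ∑ t ∈ Finset.range (k + 1), a (ℓ + t) * hankel u a (k - t) * conj (h ℓ))
      = mulCoeff (hankel u a) (hankel a h) k := by
    rw [Summable.tsum_finsetSum fun t _ => SAt t]
    have hterm : ∀ t ∈ Finset.range (k + 1),
        (∑' ℓ, a (ℓ + t) * hankel u a (k - t) * conj (h ℓ))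
          = hankel u a (k - t) * hankel a h t := by
      intro t _
      have h1 : ∀ ℓ, a (ℓ + t) * hankel u a (k - t) * conj (h ℓ)
          = hankel u a (k - t) * (a (t + ℓ) * conj (h ℓ)) := by
        intro ℓ; rw [add_comm ℓ t]; ring
      rw [tsum_congr h1, tsum_mul_left,
        show hankel a h t = ∑' ℓ, a (t + ℓ) * conj (h ℓ) from rfl]
    rw [Finset.sum_congr rfl hterm,
      show mulCoeff (hankel u a) (hankel a h) k
        = ∑ i ∈ Finset.range (k + 1), hankel u a i * hankel a h (k - i) from rfl,
      ← Finset.sum_range_reflect]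
    refine Finset.sum_congr rfl fun j hj => ?_
    have hj' : j < k + 1 := Finset.mem_range.1 hj
    rw [show k + 1 - 1 - j = k - j from by omega, show k - (k - j) = j from by omega]
  -- conj of piConjMul
  have hconjP : ∀ n, conj (piConjMul a h n) = ∑' m, a m * conj (h (m + n)) := by
    intro n
    rw [show piConjMul a h n = ∑' m, conj (a m) * h (m + n) from rfl,
      starRingEnd_apply, tsum_star]
    refine tsum_congr fun m => ?_
    simp only [starRingEnd_apply, star_mul', star_star]
  have hP0 : piConjMul a h 0 = ip h a := by
    rw [show piConjMul a h 0 = ∑' m, conj (a m) * h (m + 0) from rfl,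
      show ip h a = ∑' m, h m * conj (a m) from rfl]
    refine tsum_congr fun m => ?_
    rw [Nat.add_zero]; ring
  -- Step 3: FF and GG have equal sums (re-indexing bijection)
  have hFG : (∑' x : ℕ × ℕ × ℕ, FF u a h k x) = ∑' x : ℕ × ℕ × ℕ, GG u a h k x := by
    refine tsum_eq_tsum_of_ne_zero_bij
      (fun y => ((y : ℕ × ℕ × ℕ).2.2 + ((y : ℕ × ℕ × ℕ).1 - (y : ℕ × ℕ × ℕ).2.1),
        (y : ℕ × ℕ × ℕ).2.2, (y : ℕ × ℕ × ℕ).2.1)) ?_ ?_ ?_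
    · rintro ⟨⟨L1, j1, m1⟩, hy1⟩ ⟨⟨L2, j2, m2⟩, hy2⟩ hxy
      have hj1 : j1 < L1 := by
        by_contra hc; exact hy1 (by simp [GG, hc])
      have hj2 : j2 < L2 := by
        by_contra hc; exact hy2 (by simp [GG, hc])
      simp only [Prod.mk.injEq] at hxy
      refine Subtype.ext ?_
      simp only [Prod.mk.injEq]
      omega
    · rintro ⟨ℓ, i0, m⟩ hx
      have hi : i0 < ℓ := by
        by_contra hc; exact hx (by simp [FF, hc])
      have hval : GG u a h k (ℓ - i0 + m, m, i0) = FF u a h k (ℓ, i0, m) := by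
        have hcond : m < ℓ - i0 + m := by omega
        have h1 : k + (ℓ - i0 + m) = k + ℓ - i0 + m := by omega
        have h2 : ℓ - i0 + m - m = ℓ - i0 := by omega
        have h3 : i0 + (ℓ - i0) = ℓ := by omega
        simp only [GG, FF, if_pos hcond, if_pos hi, h1, h2, h3]
        ring
      refine ⟨⟨(ℓ - i0 + m, m, i0), ?_⟩, ?_⟩
      · exact fun hG => hx (by rw [← hval]; exact hG)
      · show (i0 + (ℓ - i0 + m - m), i0, m) = (ℓ, i0, m)
        have : i0 + (ℓ - i0 + m - m) = ℓ := by omega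
        rw [this]
    · rintro ⟨⟨L, j, m⟩, hy⟩
      have hj : j < L := by
        by_contra hc; exact hy (by simp [GG, hc])
      have hcond : m < m + (L - j) := by omega
      have h1 : k + (m + (L - j)) - m + j = k + L := by omega
      have h2 : m + (L - j) - m = L - j := by omega
      show FF u a h k (m + (L - j), m, j) = GG u a h k (L, j, m)
      simp only [FF, GG, if_pos hcond, if_pos hj, h1, h2]
      ring
  -- Step 4: the GG sum is the second term of the RHS
  have hB : (∑' x : ℕ × ℕ × ℕ, GG u a h k x)
      = hankel u (fun n => mulCoeff a (piConjMul a h) n - ip h a * a n) k := by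
    rw [Summable.tsum_prod' SG SGslice,
      show hankel u (fun n => mulCoeff a (piConjMul a h) n - ip h a * a n) k
        = ∑' L, u (k + L) * conj (mulCoeff a (piConjMul a h) L - ip h a * a L) from rfl]
    refine tsum_congr fun L => ?_
    rw [Summable.tsum_prod' (SGslice L) (SGslice2 L)]
    have hm : ∀ j, (∑' m, GG u a h k (L, j, m))
        = if j < L then (u (k + L) * conj (a j)) * conj (piConjMul a h (L - j)) else 0 := by
      intro j
      by_cases hj : j < L
      · simp only [GG, if_pos hj]
        rw [tsum_mul_left, hconjP (L - j)]
      · simp [GG, hj]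
    rw [tsum_congr hm,
      tsum_eq_sum (s := Finset.range L) (fun j hj => by
        rw [if_neg (by simpa using hj)])]
    have hcoef : mulCoeff a (piConjMul a h) L - ip h a * a L
        = ∑ j ∈ Finset.range L, a j * piConjMul a h (L - j) := by
      rw [show mulCoeff a (piConjMul a h) L
        = ∑ j ∈ Finset.range (L + 1), a j * piConjMul a h (L - j) from rfl,
        Finset.sum_range_succ, Nat.sub_self, hP0]
      ring
    rw [hcoef, map_sum, Finset.mul_sum]
    refine Finset.sum_congr rfl fun j hj => ?_
    have hjL : j < L := Finset.mem_range.1 hj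
    rw [if_pos hjL, map_mul]
    ring
  -- put everything together
  rw [show hankel (mulCoeff a (hankel u a)) h k
      = ∑' ℓ, mulCoeff a (hankel u a) (k + ℓ) * conj (h ℓ) from rfl,
    tsum_congr hsplit, Summable.tsum_add SB SA, hA, ← Summable.tsum_prod' SF SFslice, hFG, hB, add_comm]

end
end

section
/- Kronecker's theorem: for u in BMO_+(S¹) (so that the Hankel operator H_u is bounded on L²_+), H_u has complex rank N if and only if u is a rational function of the form A(z)/B(z) with A ∈ ℂ_{N−1}[z], B ∈ ℂ_N[z], B(0)=1, A and B coprime, deg A = N−1 or deg B = N, and B nonvanishing on the closed unit disc. -/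
noncomputable section

open Polynomial Finset

namespace Kron

def shift : Module.End ℂ (ℕ → ℂ) where
  toFun a := fun k => a (k + 1)
  map_add' _ _ := rfl
  map_smul' _ _ := rfl

def pS (p : ℂ[X]) (a : ℕ → ℂ) : ℕ → ℂ := aeval shift p a

lemma shift_pow (ℓ : ℕ) (a : ℕ → ℂ) : (shift ^ ℓ) a = fun k => a (k + ℓ) := by
  induction ℓ generalizing a with
  | zero => simp
  | succ n ih =>
    have h1 : (shift ^ (n + 1)) a = (shift ^ n) (shift a) := by
      rw [pow_succ]; rfl
    rw [h1, ih (shift a)]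
    rfl

lemma pS_apply_le (p : ℂ[X]) {n : ℕ} (hn : p.natDegree ≤ n) (a : ℕ → ℂ) (k : ℕ) :
    pS p a k = ∑ i ∈ range (n + 1), p.coeff i * a (k + i) := by
  have h := aeval_eq_sum_range' (x := shift) (show p.natDegree < n + 1 by omega)
  rw [pS, h]
  simp [LinearMap.sum_apply, shift_pow]

lemma pS_mul (p q : ℂ[X]) (a : ℕ → ℂ) : pS (p * q) a = pS p (pS q a) := by
  simp only [pS, map_mul]; rfl

lemma pS_zero_right (p : ℂ[X]) : pS p 0 = 0 := (aeval shift p).map_zero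

lemma pS_one (a : ℕ → ℂ) : pS 1 a = a := by simp [pS]

lemma pS_C (c : ℂ) (a : ℕ → ℂ) : pS (C c) a = c • a := by
  simp [pS, aeval_C, Module.algebraMap_end_apply]

lemma pS_add (p q : ℂ[X]) (a : ℕ → ℂ) : pS (p + q) a = pS p a + pS q a := by
  simp only [pS, map_add]; rfl

lemma pS_monomial (j : ℕ) (c : ℂ) (a : ℕ → ℂ) :
    pS (monomial j c) a = fun k => c * a (k + j) := by
  funext k
  rw [pS_apply_le (monomial j c) (natDegree_monomial_le c) a k]
  simp only [coeff_monomial]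
  rw [Finset.sum_eq_single j]
  · simp
  · intro b _ hb; simp [hb.symm]  -- coeff_monomial: if j = b
  · intro h; exact absurd (Finset.mem_range.mpr (by omega)) h

lemma natDegree_reflect_le {B : ℂ[X]} {N : ℕ} (hB : B.natDegree ≤ N) :
    (reflect N B).natDegree ≤ N := by
  rw [natDegree_le_iff_coeff_eq_zero]
  intro m hm
  rw [coeff_reflect, revAt_eq_self_of_lt hm]
  exact coeff_eq_zero_of_natDegree_lt (lt_of_le_of_lt hB hm)

lemma reflect_reflect {B : ℂ[X]} {N : ℕ} (hB : B.natDegree ≤ N) :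
    reflect N (reflect N B) = B := by
  ext i
  rw [coeff_reflect, coeff_reflect, revAt_invol]

lemma coeff_mul_F (B : ℂ[X]) {N : ℕ} (hB : B.natDegree ≤ N) (a : ℕ → ℂ) (k : ℕ) :
    PowerSeries.coeff (N + k) ((↑B : PowerSeries ℂ) * PowerSeries.mk a) = pS (reflect N B) a k := by
  rw [PowerSeries.coeff_mul, Finset.Nat.sum_antidiagonal_eq_sum_range_succ_mk]
  have hstep1 : ∑ j ∈ range (N + k + 1),
      PowerSeries.coeff j ↑B * PowerSeries.coeff (N + k - j) (PowerSeries.mk a)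
      = ∑ j ∈ range (N + 1), B.coeff j * a (N + k - j) := by
    rw [← Finset.sum_subset (Finset.range_subset_range.mpr (by omega : N + 1 ≤ N + k + 1))]
    · exact Finset.sum_congr rfl fun j _ => by
        rw [Polynomial.coeff_coe, PowerSeries.coeff_mk]
    · intro j hj hj'
      have : N < j := by simp only [Finset.mem_range] at hj hj' ⊢; omega
      rw [Polynomial.coeff_coe, coeff_eq_zero_of_natDegree_lt (lt_of_le_of_lt hB this),
        zero_mul]
  rw [hstep1]
  rw [pS_apply_le (reflect N B) (natDegree_reflect_le hB) a k]
  have hstep2 : ∀ i ∈ range (N + 1), (reflect N B).coeff i * a (k + i)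
      = B.coeff (N - i) * a (k + i) := by
    intro i hi
    rw [coeff_reflect, revAt_le (by simp at hi; omega)]
  rw [Finset.sum_congr rfl hstep2]
  rw [← Finset.sum_range_reflect (fun i => B.coeff (N - i) * a (k + i)) (N + 1)]
  refine Finset.sum_congr rfl fun j hj => ?_
  simp only [Finset.mem_range] at hj
  have h1 : N + 1 - 1 - j = N - j := by omega
  have h2 : N - (N - j) = j := by omega
  have h3 : k + (N - j) = N + k - j := by omega
  rw [h1, h2, h3]

def V (a : ℕ → ℂ) : Submodule ℂ (ℕ → ℂ) :=
  Submodule.span ℂ (Set.range fun ℓ : ℕ => (fun k => a (k + ℓ) : ℕ → ℂ))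


lemma pS_sum {ι : Type*} (s : Finset ι) (f : ι → ℂ[X]) (a : ℕ → ℂ) :
    pS (∑ i ∈ s, f i) a = ∑ i ∈ s, pS (f i) a := by
  simp only [pS, map_sum, LinearMap.sum_apply]

lemma pS_add' (p q : ℂ[X]) (a : ℕ → ℂ) : pS (p + q) a = pS p a + pS q a := by
  simp only [pS, map_add, LinearMap.add_apply]

lemma pS_X_pow (ℓ : ℕ) (a : ℕ → ℂ) : pS (X ^ ℓ) a = fun k => a (k + ℓ) := by
  rw [pS, map_pow, aeval_X, ← shift_pow ℓ a]

lemma coeff_msum {s : Finset ℕ} (g : ℕ → ℂ) (j : ℕ) :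
    (∑ i ∈ s, monomial i (g i)).coeff j = if j ∈ s then g j else 0 := by
  rw [finset_sum_coeff]
  simp only [coeff_monomial]
  rw [Finset.sum_ite_eq' s j g]

lemma pS_msum (s : Finset ℕ) (g : ℕ → ℂ) (a : ℕ → ℂ) :
    pS (∑ i ∈ s, monomial i (g i)) a = ∑ i ∈ s, g i • (fun k => a (k + i)) := by
  rw [pS_sum]
  refine Finset.sum_congr rfl fun i _ => ?_
  rw [pS_monomial]
  funext k
  simp

lemma rank_V (a : ℕ → ℂ) (Q : ℂ[X]) (hQm : Q.Monic) (hQa : pS Q a = 0)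
    (hmin : ∀ p : ℂ[X], p ≠ 0 → pS p a = 0 → Q.natDegree ≤ p.natDegree) :
    Module.rank ℂ (V a) = Q.natDegree := by
  rcases Nat.eq_zero_or_pos Q.natDegree with hM | hM
  · have hQ1 : Q = 1 := hQm.natDegree_eq_zero.mp hM
    have ha0 : a = 0 := by rw [hQ1, pS_one] at hQa; exact hQa
    have hVbot : V a = ⊥ := by
      rw [V, ha0]
      have hrange : (Set.range fun ℓ : ℕ => (fun k => (0 : ℕ → ℂ) (k + ℓ) : ℕ → ℂ))
          = {(0 : ℕ → ℂ)} := by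
        ext x
        constructor
        · rintro ⟨ℓ, rfl⟩; rfl
        · rintro rfl; exact ⟨0, rfl⟩
      rw [hrange, Submodule.span_singleton_eq_bot.mpr rfl]
    rw [hVbot, hM]
    simp
  · let M := Q.natDegree
    have hMQ : M = Q.natDegree := rfl
    let v : Fin M → (ℕ → ℂ) := fun i => fun k => a (k + (i : ℕ))
    have hli : LinearIndependent ℂ v := by
      rw [Fintype.linearIndependent_iff]
      intro g hg
      set g' : ℕ → ℂ := fun j => if h : j < M then g ⟨j, h⟩ else 0 with hg'
      set p : ℂ[X] := ∑ i ∈ Finset.range M, monomial i (g' i) with hp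
      have hpa : pS p a = 0 := by
        rw [hp, pS_msum, ← Fin.sum_univ_eq_sum_range (fun i => g' i • (fun k => a (k + i))) M,
          ← hg]
        refine Finset.sum_congr rfl fun i _ => ?_
        have : g' (i : ℕ) = g i := by simp [hg', i.isLt]
        rw [this]
      have hp0 : p = 0 := by
        by_contra hp0
        have h1 := hmin p hp0 hpa
        have h2 : p.natDegree ≤ M - 1 := by
          apply natDegree_sum_le_of_forall_le
          intro i hi
          refine le_trans (natDegree_monomial_le _) ?_
          have : i < M := Finset.mem_range.mp hi
          omega
        omega
      intro i
      have hc := congrArg (fun q => Polynomial.coeff q (i : ℕ)) hp0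
      simp only [hp, coeff_msum, coeff_zero] at hc
      rw [if_pos (Finset.mem_range.mpr i.isLt)] at hc
      rw [hg'] at hc
      simpa [i.isLt] using hc
    have hspan : Submodule.span ℂ (Set.range v) = V a := by
      apply le_antisymm
      · rw [Submodule.span_le]
        rintro x ⟨i, rfl⟩
        exact Submodule.subset_span ⟨(i : ℕ), rfl⟩
      · rw [V, Submodule.span_le]
        rintro x ⟨ℓ, rfl⟩
        show (fun k => a (k + ℓ)) ∈ (Submodule.span ℂ (Set.range v) : Set (ℕ → ℂ))
        have hdeg : (X ^ ℓ %ₘ Q).natDegree ≤ M - 1 := by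
          rcases eq_or_ne (X ^ ℓ %ₘ Q) 0 with h | h
          · simp [h]
          · have h1 := degree_modByMonic_lt (X ^ ℓ) hQm
            have h2 := natDegree_lt_natDegree h h1
            omega
        have hx : (fun k => a (k + ℓ)) = pS (X ^ ℓ %ₘ Q) a := by
          have hmd : X ^ ℓ %ₘ Q + Q * (X ^ ℓ /ₘ Q) = X ^ ℓ := modByMonic_add_div (X ^ ℓ) Q
          have h3 : pS (X ^ ℓ) a = pS (X ^ ℓ %ₘ Q) a + pS (Q * (X ^ ℓ /ₘ Q)) a := by
            conv_lhs => rw [← hmd]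
            rw [pS_add']
          rw [mul_comm, pS_mul, hQa, pS_zero_right, add_zero] at h3
          rw [← h3, pS_X_pow]
        rw [hx]
        have hxx : pS (X ^ ℓ %ₘ Q) a
            = ∑ i ∈ range M, (X ^ ℓ %ₘ Q).coeff i • (fun k => a (k + i)) := by
          funext k
          rw [pS_apply_le (X ^ ℓ %ₘ Q) hdeg a k]
          have hM1 : M - 1 + 1 = M := by omega
          rw [hM1]
          simp
        rw [hxx]
        apply Submodule.sum_mem
        intro i hi
        apply Submodule.smul_mem
        apply Submodule.subset_span
        exact ⟨⟨i, Finset.mem_range.mp hi⟩, rfl⟩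
    have b : Module.Basis (Fin M) ℂ (Submodule.span ℂ (Set.range v)) := Module.Basis.span hli
    have hr := rank_eq_card_basis b
    rw [hspan] at hr
    rw [hr]
    simp
    rfl

lemma exists_ann (a : ℕ → ℂ) {N : ℕ}
    (hrank : Module.rank ℂ (V a) = N) : ∃ p : ℂ[X], p ≠ 0 ∧ pS p a = 0 := by
  by_contra h
  push_neg at h
  have hli : LinearIndependent ℂ (fun ℓ : ℕ => (fun k => a (k + ℓ) : ℕ → ℂ)) := by
    rw [linearIndependent_iff']
    intro s g hg i hi
    set p : ℂ[X] := ∑ i ∈ s, monomial i (g i) with hp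
    have hpa : pS p a = 0 := by rw [hp, pS_msum, hg]
    have hp0 : p = 0 := by
      by_contra hp0
      exact h p hp0 hpa
    have hc := congrArg (fun q => Polynomial.coeff q i) hp0
    simp only [hp, coeff_msum, coeff_zero] at hc
    rwa [if_pos hi] at hc
  let w : ℕ → V a := fun ℓ => ⟨fun k => a (k + ℓ), Submodule.subset_span ⟨ℓ, rfl⟩⟩
  have hli2 : LinearIndependent ℂ w := by
    apply LinearIndependent.of_comp (V a).subtype
    exact hli
  have hinf := hli2.aleph0_le_rank
  rw [hrank] at hinf
  exact absurd hinf (by simp [Cardinal.nat_lt_aleph0])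

lemma exists_min (a : ℕ → ℂ) (h : ∃ p : ℂ[X], p ≠ 0 ∧ pS p a = 0) :
    ∃ Q : ℂ[X], Q.Monic ∧ pS Q a = 0 ∧
      ∀ p : ℂ[X], p ≠ 0 → pS p a = 0 → Q.natDegree ≤ p.natDegree := by
  classical
  have hex : ∃ n, ∃ p : ℂ[X], p ≠ 0 ∧ pS p a = 0 ∧ p.natDegree = n := by
    obtain ⟨p, hp0, hpa⟩ := h
    exact ⟨p.natDegree, p, hp0, hpa, rfl⟩
  obtain ⟨p, hp0, hpa, hpn⟩ := Nat.find_spec hex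
  have hC : (C (leadingCoeff p)⁻¹ : ℂ[X]) ≠ 0 := by
    simp [leadingCoeff_ne_zero.mpr hp0]
  refine ⟨p * C (leadingCoeff p)⁻¹, monic_mul_leadingCoeff_inv hp0, ?_, ?_⟩
  · rw [mul_comm, pS_mul, hpa, pS_zero_right]
  · intro q hq0 hqa
    have hd : (p * C (leadingCoeff p)⁻¹).natDegree = p.natDegree := by
      rw [natDegree_mul hp0 hC, natDegree_C, add_zero]
    rw [hd, hpn]
    exact Nat.find_le ⟨q, hq0, hqa, rfl⟩



lemma a_tendsto_zero {a : ℕ → ℂ} (ha : Summable fun k : ℕ => ‖a k‖ ^ 2) :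
    Filter.Tendsto a Filter.atTop (nhds 0) := by
  have h1 : Filter.Tendsto (fun k => ‖a k‖ ^ 2) Filter.atTop (nhds 0) := ha.tendsto_atTop_zero
  have h3 : Filter.Tendsto (fun k => ‖a k‖) Filter.atTop (nhds 0) := by
    have h2 := (Real.continuous_sqrt.tendsto 0).comp h1
    simp only [Function.comp_def] at h2
    rw [Real.sqrt_zero] at h2
    exact h2.congr fun k => Real.sqrt_sq (norm_nonneg _)
  exact tendsto_zero_iff_norm_tendsto_zero.mpr h3

lemma summable_norm_mul_geo {a : ℕ → ℂ} (ha : Summable fun k : ℕ => ‖a k‖ ^ 2)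
    {r : ℝ} (h0 : 0 ≤ r) (h1 : r < 1) :
    Summable fun k => ‖a k‖ * r ^ k := by
  have hgeo : Summable fun k : ℕ => (r ^ 2) ^ k :=
    summable_geometric_of_lt_one (by positivity) (by nlinarith)
  apply Summable.of_nonneg_of_le (fun k => by positivity) (fun k => ?_) (ha.add hgeo)
  have hx : 0 ≤ ‖a k‖ := norm_nonneg _
  have hy : (0:ℝ) ≤ r ^ k := by positivity
  have : (r ^ 2) ^ k = (r ^ k) ^ 2 := by ring
  rw [this]
  nlinarith [sq_nonneg (‖a k‖ - r ^ k)]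

lemma summable_a_z {a : ℕ → ℂ} (ha : Summable fun k : ℕ => ‖a k‖ ^ 2)
    {z : ℂ} (hz : ‖z‖ < 1) : Summable fun k => a k * z ^ k := by
  apply Summable.of_norm
  have := summable_norm_mul_geo ha (norm_nonneg z) hz
  simpa [norm_mul, norm_pow] using this

lemma coeff_monomial_mul_mk (j : ℕ) (c : ℂ) (a : ℕ → ℂ) (n : ℕ) :
    PowerSeries.coeff n ((↑(monomial j c : ℂ[X]) : PowerSeries ℂ) * PowerSeries.mk a)
      = if j ≤ n then c * a (n - j) else 0 := by
  rw [PowerSeries.coeff_mul, Finset.Nat.sum_antidiagonal_eq_sum_range_succ_mk]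
  simp only [Polynomial.coeff_coe, coeff_monomial, PowerSeries.coeff_mk, ite_mul, zero_mul]
  rw [Finset.sum_ite_eq (Finset.range (n+1)) j (fun k => c * a (n - k))]
  simp [Nat.lt_succ_iff]

lemma hasSum_BF {a : ℕ → ℂ} (ha : Summable fun k : ℕ => ‖a k‖ ^ 2)
    (B : ℂ[X]) {z : ℂ} (hz : ‖z‖ < 1) :
    HasSum (fun n => PowerSeries.coeff n ((↑B : PowerSeries ℂ) * PowerSeries.mk a) * z ^ n)
      (B.eval z * ∑' k, a k * z ^ k) := by
  induction B using Polynomial.induction_on' with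
  | add p q hp hq =>
    have hpq := hp.add hq
    have heq : (fun n => PowerSeries.coeff n ((↑(p + q) : PowerSeries ℂ) * PowerSeries.mk a) * z ^ n)
        = fun n => PowerSeries.coeff n ((↑p : PowerSeries ℂ) * PowerSeries.mk a) * z ^ n
          + PowerSeries.coeff n ((↑q : PowerSeries ℂ) * PowerSeries.mk a) * z ^ n := by
      funext n
      rw [Polynomial.coe_add, add_mul, map_add]
      ring
    rw [heq, eval_add, add_mul]
    exact hpq
  | monomial j c =>
    have hbase : HasSum (fun k => a k * z ^ k) (∑' k, a k * z ^ k) := (summable_a_z ha hz).hasSum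
    have h2 := hbase.mul_left (c * z ^ j)
    set f : ℕ → ℂ := fun n => (if j ≤ n then c * a (n - j) else 0) * z ^ n with hf
    have hinj : Function.Injective (fun k : ℕ => k + j) := fun x y h => by simpa using h
    have hsupp : ∀ x, x ∉ Set.range (fun k : ℕ => k + j) → f x = 0 := by
      intro n hn
      have hnj : n < j := by
        by_contra hc
        exact hn ⟨n - j, by show n - j + j = n; omega⟩
      simp [hf, Nat.not_le.mpr hnj]
    have hcomp : (f ∘ fun k : ℕ => k + j) = fun k => c * z ^ j * (a k * z ^ k) := by
      funext k
      simp only [Function.comp_apply, hf, if_pos (Nat.le_add_left j k), Nat.add_sub_cancel]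
      rw [pow_add]
      ring
    have h3 : HasSum f (c * z ^ j * ∑' k, a k * z ^ k) := by
      rw [← Function.Injective.hasSum_iff hinj hsupp, hcomp]
      exact h2
    have heq : (fun n => PowerSeries.coeff n ((↑(monomial j c : ℂ[X]) : PowerSeries ℂ) * PowerSeries.mk a) * z ^ n) = f := by
      funext n
      rw [coeff_monomial_mul_mk]
    rw [heq, eval_monomial]
    exact h3

lemma coeff_zero_of_tsum_zero (d : ℕ → ℂ) (C : ℝ) (hC : ∀ n, ‖d n‖ ≤ C)
    (hz : ∀ z : ℂ, ‖z‖ < 1 → ∑' n, d n * z ^ n = 0) : ∀ m, d m = 0 := by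
  have hC0 : (0:ℝ) ≤ C := le_trans (norm_nonneg _) (hC 0)
  intro m
  induction m using Nat.strong_induction_on with
  | _ m ih =>
  have key : ∀ x : ℝ, 0 < x → x ≤ (1:ℝ)/4 → ‖d m‖ ≤ x * (2 * C) := by
    intro x hx0 hx4
    set z : ℂ := (x : ℂ) with hzdef
    have hzn : ‖z‖ = x := by
      rw [hzdef, Complex.norm_real, Real.norm_eq_abs, abs_of_pos hx0]
    have hz1 : ‖z‖ < 1 := by rw [hzn]; linarith
    have hsum0 := hz z hz1
    have hgeo : Summable fun n : ℕ => C * ((1:ℝ)/4) ^ n :=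
      (summable_geometric_of_lt_one (by norm_num) (by norm_num)).mul_left C
    have hbound : ∀ (s n : ℕ), ‖d (n + s) * z ^ n‖ ≤ C * ((1:ℝ)/4) ^ n := by
      intro s n
      rw [norm_mul, norm_pow, hzn]
      exact mul_le_mul (hC _) (pow_le_pow_left₀ (le_of_lt hx0) hx4 n) (by positivity) hC0
    have hsummable : ∀ s : ℕ, Summable (fun n : ℕ => d (n + s) * z ^ n) := by
      intro s
      apply Summable.of_norm
      exact Summable.of_nonneg_of_le (fun n => norm_nonneg _) (hbound s) hgeo
    have h1 : ∑' n : ℕ, d (n + m) * z ^ (n + m) = ∑' n, d n * z ^ n := by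
      have hinj : Function.Injective (fun n : ℕ => n + m) := fun x y h => by simpa using h
      have hsupp : (Function.support fun n => d n * z ^ n) ⊆ Set.range (fun n : ℕ => n + m) := by
        intro n hn
        rcases lt_or_ge n m with h | h
        · exact absurd (by simp [ih n h] : d n * z ^ n = 0) hn
        · exact ⟨n - m, by show n - m + m = n; omega⟩
      exact Function.Injective.tsum_eq (f := fun n => d n * z ^ n) hinj hsupp
    have h2 : ∑' n : ℕ, d (n + m) * z ^ (n + m) = z ^ m * ∑' n : ℕ, d (n + m) * z ^ n := by
      rw [← tsum_mul_left]
      congr 1; funext n; rw [pow_add]; ring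
    have hzne : z ≠ 0 := by
      rw [hzdef]
      exact_mod_cast ne_of_gt hx0
    have h3 : ∑' n : ℕ, d (n + m) * z ^ n = 0 := by
      have h := h1.trans hsum0
      rw [h2] at h
      exact (mul_eq_zero.mp h).resolve_left (pow_ne_zero _ hzne)
    have h4 := Summable.tsum_eq_zero_add (hsummable m)
    rw [h3] at h4
    have h5 : ∑' (n:ℕ), d (n + 1 + m) * z ^ (n + 1) = z * ∑' n : ℕ, d (n + (m+1)) * z ^ n := by
      rw [← tsum_mul_left]
      congr 1; funext n
      have : n + 1 + m = n + (m + 1) := by omega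
      rw [this, pow_succ]
      ring
    rw [h5] at h4
    have h6 : d m = - (z * ∑' n : ℕ, d (n + (m+1)) * z ^ n) := by
      simp only [zero_add, pow_zero, mul_one] at h4
      linear_combination -h4
    have hS : ‖∑' n : ℕ, d (n + (m+1)) * z ^ n‖ ≤ 2 * C := by
      calc ‖∑' n : ℕ, d (n + (m+1)) * z ^ n‖
          ≤ ∑' n : ℕ, ‖d (n + (m+1)) * z ^ n‖ := by
            apply norm_tsum_le_tsum_norm
            exact Summable.of_nonneg_of_le (fun n => norm_nonneg _) (hbound (m+1)) hgeo
        _ ≤ ∑' n : ℕ, C * ((1:ℝ)/4) ^ n := by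
            apply Summable.tsum_le_tsum (hbound (m+1))
            · exact Summable.of_nonneg_of_le (fun n => norm_nonneg _) (hbound (m+1)) hgeo
            · exact hgeo
        _ = C * ((1:ℝ) - 1/4)⁻¹ := by
            rw [tsum_mul_left, tsum_geometric_of_lt_one (by norm_num) (by norm_num)]
        _ ≤ 2 * C := by nlinarith
    rw [h6, norm_neg, norm_mul, hzn]
    exact mul_le_mul_of_nonneg_left hS (le_of_lt hx0)
  by_contra hdm
  have hpos : 0 < ‖d m‖ := norm_pos_iff.mpr hdm
  set x : ℝ := min ((1:ℝ)/4) (‖d m‖ / (4 * C + 1)) with hx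
  have hx0 : 0 < x := by
    apply lt_min (by norm_num)
    positivity
  have hkey := key x hx0 (min_le_left _ _)
  have hx2 : x ≤ ‖d m‖ / (4 * C + 1) := min_le_right _ _
  have : x * (2 * C) < ‖d m‖ := by
    calc x * (2 * C) ≤ (‖d m‖ / (4 * C + 1)) * (2 * C) := by
          apply mul_le_mul_of_nonneg_right hx2 (by positivity)
      _ < ‖d m‖ := by
          rw [div_mul_eq_mul_div, div_lt_iff₀ (by positivity)]
          nlinarith
  linarith

def truncP (M : ℕ) (φ : PowerSeries ℂ) : ℂ[X] :=
  ∑ n ∈ Finset.range M, C (PowerSeries.coeff n φ) * X ^ n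

lemma coeff_truncP (M : ℕ) (φ : PowerSeries ℂ) (j : ℕ) :
    (truncP M φ).coeff j = if j < M then PowerSeries.coeff j φ else 0 := by
  rw [truncP, finset_sum_coeff]
  simp only [coeff_C_mul, coeff_X_pow, mul_ite, mul_one, mul_zero]
  rw [Finset.sum_ite_eq (Finset.range M) j (fun n => PowerSeries.coeff n φ)]
  simp [Finset.mem_range]

lemma natDegree_truncP_le (M : ℕ) (φ : PowerSeries ℂ) : (truncP M φ).natDegree ≤ M - 1 := by
  rw [natDegree_le_iff_coeff_eq_zero]
  intro m hm
  rw [coeff_truncP]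
  have : ¬ (m < M) := by omega
  simp [this]

lemma coe_truncP (M : ℕ) (φ : PowerSeries ℂ)
    (h : ∀ k, PowerSeries.coeff (M + k) φ = 0) : (↑(truncP M φ) : PowerSeries ℂ) = φ := by
  apply PowerSeries.ext
  intro n
  rw [Polynomial.coeff_coe, coeff_truncP]
  rcases lt_or_ge n M with hn | hn
  · simp [hn]
  · have h2 := h (n - M)
    have : M + (n - M) = n := by omega
    rw [this] at h2
    simp [Nat.not_lt.mpr hn, h2]

lemma hasSum_poly (A : ℂ[X]) (z : ℂ) : HasSum (fun n => A.coeff n * z ^ n) (A.eval z) := by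
  have h : ∀ b ∉ Finset.range (A.natDegree + 1), A.coeff b * z ^ b = 0 := by
    intro b hb
    rw [coeff_eq_zero_of_natDegree_lt (by simp only [Finset.mem_range] at hb; omega), zero_mul]
  have h2 := hasSum_sum_of_ne_finset_zero (L := SummationFilter.unconditional ℕ) (f := fun n => A.coeff n * z ^ n) h
  rwa [← eval_eq_sum_range (p := A) z] at h2

lemma poly_coeff_bound (A : ℂ[X]) (n : ℕ) :
    ‖A.coeff n‖ ≤ ∑ j ∈ Finset.range (A.natDegree + 1), ‖A.coeff j‖ := by
  rcases le_or_gt n A.natDegree with h | h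
  · exact Finset.single_le_sum (f := fun j => ‖A.coeff j‖) (fun j _ => norm_nonneg _)
      (Finset.mem_range.mpr (by omega))
  · rw [coeff_eq_zero_of_natDegree_lt h, norm_zero]
    exact Finset.sum_nonneg fun j _ => norm_nonneg _

lemma exists_coeff_mul_bound {a : ℕ → ℂ} (ha : Summable fun k : ℕ => ‖a k‖ ^ 2) (B : ℂ[X]) :
    ∃ C : ℝ, ∀ n, ‖PowerSeries.coeff n ((↑B : PowerSeries ℂ) * PowerSeries.mk a)‖ ≤ C := by
  have hb : BddAbove (Set.range fun k => ‖a k‖) := by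
    have h1 := (a_tendsto_zero ha).norm
    exact h1.bddAbove_range
  obtain ⟨Ca, hCa⟩ := hb
  have hCa' : ∀ k, ‖a k‖ ≤ Ca := fun k => hCa ⟨k, rfl⟩
  have hCa0 : (0:ℝ) ≤ Ca := le_trans (norm_nonneg _) (hCa' 0)
  refine ⟨(∑ j ∈ Finset.range (B.natDegree + 1), ‖B.coeff j‖) * Ca, fun n => ?_⟩
  rw [PowerSeries.coeff_mul, Finset.Nat.sum_antidiagonal_eq_sum_range_succ_mk]
  have h1 : ‖∑ j ∈ Finset.range (n+1),
      PowerSeries.coeff j ↑B * PowerSeries.coeff (n - j) (PowerSeries.mk a)‖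
      ≤ ∑ j ∈ Finset.range (n+1), ‖B.coeff j‖ * Ca := by
    refine le_trans (norm_sum_le _ _) (Finset.sum_le_sum fun j _ => ?_)
    rw [Polynomial.coeff_coe, PowerSeries.coeff_mk, norm_mul]
    exact mul_le_mul_of_nonneg_left (hCa' _) (norm_nonneg _)
  refine le_trans h1 ?_
  rw [← Finset.sum_mul]
  apply mul_le_mul_of_nonneg_right ?_ hCa0
  rcases le_or_gt (n+1) (B.natDegree+1) with h | h
  · exact Finset.sum_le_sum_of_subset_of_nonneg (Finset.range_subset_range.mpr h)
      (fun _ _ _ => norm_nonneg _)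
  · have heq : ∑ j ∈ Finset.range (B.natDegree+1), ‖B.coeff j‖
        = ∑ j ∈ Finset.range (n+1), ‖B.coeff j‖ := by
      apply Finset.sum_subset (Finset.range_subset_range.mpr (le_of_lt h))
      intro x hx hnx
      rw [coeff_eq_zero_of_natDegree_lt (by simp only [Finset.mem_range] at hx hnx ⊢; omega),
        norm_zero]
    rw [heq]

lemma hPS_of_tsum {a : ℕ → ℂ} {A B : ℂ[X]} (ha : Summable fun k : ℕ => ‖a k‖ ^ 2)
    (hBnv : ∀ z : ℂ, ‖z‖ ≤ 1 → B.eval z ≠ 0)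
    (htsum : ∀ z : ℂ, ‖z‖ < 1 → ∑' k : ℕ, a k * z ^ k = A.eval z / B.eval z) :
    (↑B : PowerSeries ℂ) * PowerSeries.mk a = ↑A := by
  obtain ⟨C1, hC1⟩ := exists_coeff_mul_bound ha B
  set d : ℕ → ℂ := fun n => PowerSeries.coeff n ((↑B : PowerSeries ℂ) * PowerSeries.mk a) - A.coeff n with hd
  have hdb : ∀ n, ‖d n‖ ≤ C1 + ∑ j ∈ Finset.range (A.natDegree + 1), ‖A.coeff j‖ := fun n =>
    le_trans (norm_sub_le _ _) (add_le_add (hC1 n) (poly_coeff_bound A n))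
  have hzero : ∀ z : ℂ, ‖z‖ < 1 → ∑' n : ℕ, d n * z ^ n = 0 := by
    intro z hz
    have h1 := hasSum_BF ha B hz
    have h2 := hasSum_poly A z
    have h3 := h1.sub h2
    have harr : (fun n => PowerSeries.coeff n ((↑B : PowerSeries ℂ) * PowerSeries.mk a) * z ^ n
        - A.coeff n * z ^ n) = fun n => d n * z ^ n := by
      funext n; rw [hd]; ring
    rw [harr] at h3
    have hval : B.eval z * (∑' k : ℕ, a k * z ^ k) - A.eval z = 0 := by
      rw [htsum z hz, mul_comm, div_mul_cancel₀ _ (hBnv z (le_of_lt hz)), sub_self]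
    rw [hval] at h3
    exact h3.tsum_eq
  have hdz := coeff_zero_of_tsum_zero d _ hdb hzero
  apply PowerSeries.ext
  intro n
  have h4 := hdz n
  rw [hd] at h4
  rw [Polynomial.coeff_coe]
  exact sub_eq_zero.mp h4

lemma natDegree_ge_of_ann {a : ℕ → ℂ} {A B p : ℂ[X]} {N : ℕ} (hN : 0 < N)
    (hPS : (↑B : PowerSeries ℂ) * PowerSeries.mk a = ↑A) (hA0 : A ≠ 0) (hB1 : B.coeff 0 = 1)
    (hd : A.natDegree = N - 1 ∨ B.natDegree = N)
    (hcop : IsCoprime A B) (hp0 : p ≠ 0) (hpa : pS p a = 0) : N ≤ p.natDegree := by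
  set M := p.natDegree with hM
  set BP : ℂ[X] := reflect M p with hBP
  have hBP0 : BP ≠ 0 := fun h => hp0 (reflect_eq_zero_iff.mp h)
  have hBPle : BP.natDegree ≤ M := natDegree_reflect_le le_rfl
  have hco2 : ∀ k, PowerSeries.coeff (M + k) ((↑BP : PowerSeries ℂ) * PowerSeries.mk a) = 0 := by
    intro k
    rw [coeff_mul_F BP hBPle a k, hBP, reflect_reflect le_rfl, hpa]
    rfl
  set AP : ℂ[X] := truncP M ((↑BP : PowerSeries ℂ) * PowerSeries.mk a) with hAP
  have hAPco : (↑AP : PowerSeries ℂ) = (↑BP : PowerSeries ℂ) * PowerSeries.mk a := coe_truncP _ _ hco2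
  have heq : A * BP = B * AP := by
    have h1 : ((A * BP : ℂ[X]) : PowerSeries ℂ) = ((B * AP : ℂ[X]) : PowerSeries ℂ) := by
      rw [Polynomial.coe_mul, Polynomial.coe_mul, hAPco, ← hPS]
      ring
    exact Polynomial.coe_inj.mp h1
  have hB0 : B ≠ 0 := fun h => by simp [h] at hB1
  have hBdvd : B ∣ BP := by
    apply (hcop.symm).dvd_of_dvd_mul_left
    exact ⟨AP, heq⟩
  have hBle : B.natDegree ≤ M := le_trans (natDegree_le_of_dvd hBdvd hBP0) hBPle
  rcases hd with hdA | hdB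
  · have hAP0 : AP ≠ 0 := by
      intro h
      rw [h, mul_zero] at heq
      exact mul_ne_zero hA0 hBP0 heq
    rcases Nat.eq_zero_or_pos M with hM0 | hM0
    · exfalso
      apply hAP0
      rw [hAP, hM0, truncP]
      simp
    have hAPle : AP.natDegree ≤ M - 1 := natDegree_truncP_le _ _
    have hmul1 : A.natDegree + BP.natDegree = B.natDegree + AP.natDegree := by
      rw [← natDegree_mul hA0 hBP0, ← natDegree_mul hB0 hAP0, heq]
    have hBBP : B.natDegree ≤ BP.natDegree := natDegree_le_of_dvd hBdvd hBP0
    omega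
  · omega

end Kron

open Kron in
/-- **Kronecker's theorem.** For `u ∈ L²_+` with coefficients `a` (e.g.
`u ∈ BMO_+`), the Hankel operator `H_u` has complex rank `N ≥ 1` — i.e. the span of the
columns `(û(k+ℓ))_{k≥0}`, `ℓ ≥ 0`, of the Hankel matrix has dimension `N` — if and only
if `u = A/B` with `A ∈ ℂ_{N−1}[z]`, `B ∈ ℂ_N[z]`, `B(0)=1`, `A, B` coprime,
`deg A = N−1` or `deg B = N`, and `B` nonvanishing on the closed unit disc. -/
theorem stmt8 (a : ℕ → ℂ) (ha : Summable fun k : ℕ => ‖a k‖ ^ 2) (N : ℕ) (hN : 0 < N) :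
    Module.rank ℂ
        ↥(Submodule.span ℂ (Set.range fun ℓ : ℕ => (fun k => a (k + ℓ) : ℕ → ℂ))) = N ↔
      ∃ A B : Polynomial ℂ, A ≠ 0 ∧ B.coeff 0 = 1 ∧
        A.natDegree ≤ N - 1 ∧ B.natDegree ≤ N ∧
        (A.natDegree = N - 1 ∨ B.natDegree = N) ∧
        IsCoprime A B ∧
        (∀ z : ℂ, ‖z‖ ≤ 1 → B.eval z ≠ 0) ∧
        ∀ z : ℂ, ‖z‖ < 1 → ∑' k : ℕ, a k * z ^ k = A.eval z / B.eval z := by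
  show Module.rank ℂ (V a) = N ↔ _
  constructor
  · -- forward direction
    intro hrank
    obtain ⟨Q, hQm, hQa, hmin⟩ := exists_min a (exists_ann a hrank)
    have hQN : Q.natDegree = N := by
      have h1 := rank_V a Q hQm hQa hmin
      rw [hrank] at h1
      exact_mod_cast h1.symm
    set B : ℂ[X] := reflect N Q with hBdef
    have hQle : Q.natDegree ≤ N := le_of_eq hQN
    have hBle : B.natDegree ≤ N := natDegree_reflect_le hQle
    have hB1 : B.coeff 0 = 1 := by
      rw [hBdef, coeff_reflect, revAt_le (Nat.zero_le N), Nat.sub_zero, ← hQN]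
      exact hQm.coeff_natDegree
    have hB0 : B ≠ 0 := fun h => by simp [h] at hB1
    set A : ℂ[X] := truncP N ((↑B : PowerSeries ℂ) * PowerSeries.mk a) with hAdef
    have hreflB : reflect N B = Q := by rw [hBdef, reflect_reflect hQle]
    have hco : ∀ k, PowerSeries.coeff (N + k) ((↑B : PowerSeries ℂ) * PowerSeries.mk a) = 0 := by
      intro k
      rw [coeff_mul_F B hBle a k, hreflB, hQa]
      rfl
    have hPS : (↑B : PowerSeries ℂ) * PowerSeries.mk a = ↑A := (coe_truncP _ _ hco).symm
    have hcoeq : ∀ n, PowerSeries.coeff n ((↑B : PowerSeries ℂ) * PowerSeries.mk a) = A.coeff n := by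
      intro n
      rw [← Polynomial.coeff_coe, hPS]
    have hAle : A.natDegree ≤ N - 1 := natDegree_truncP_le _ _
    have hA0 : A ≠ 0 := by
      intro h
      have hBmk : (↑B : PowerSeries ℂ) * PowerSeries.mk a = 0 := by rw [hPS, h]; simp
      have hBne : (↑B : PowerSeries ℂ) ≠ 0 := fun hh => hB0 (Polynomial.coe_eq_zero_iff.mp hh)
      have hmk : PowerSeries.mk a = 0 := by
        rcases mul_eq_zero.mp hBmk with hh | hh
        · exact absurd hh hBne
        · exact hh
      have ha0 : a = 0 := by
        funext k
        have := congrArg (PowerSeries.coeff k) hmk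
        simpa using this
      have := hmin 1 one_ne_zero (by rw [pS_one, ha0])
      simp at this
      omega
    have hBnv : ∀ z : ℂ, ‖z‖ ≤ 1 → B.eval z ≠ 0 := by
      intro z hz1 hBz
      have hz0 : z ≠ 0 := by
        intro h
        rw [h, ← coeff_zero_eq_eval_zero, hB1] at hBz
        exact one_ne_zero hBz
      set α := z⁻¹ with hα
      have hα0 : α ≠ 0 := inv_ne_zero hz0
      letI := invertibleOfNonzero hα0
      have hQα : Q.eval α = 0 := by
        have h := eval₂_reflect_mul_pow (RingHom.id ℂ) α N Q hQle
        have hinv : (⅟α : ℂ) = z := by rw [invOf_eq_inv, hα, inv_inv]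
        rw [hinv] at h
        have h2 : eval z B * α ^ N = eval α Q := h
        rw [hBz, zero_mul] at h2
        exact h2.symm
      have hnα : 1 ≤ ‖α‖ := by
        rw [hα, norm_inv]
        exact (one_le_inv₀ (norm_pos_iff.mpr hz0)).mpr hz1
      obtain ⟨Q₁, hQ₁⟩ := dvd_iff_isRoot.mpr hQα
      have hQ₁0 : Q₁ ≠ 0 := by
        rintro rfl
        rw [mul_zero] at hQ₁
        exact hQm.ne_zero hQ₁
      have hQ₁d : Q₁.natDegree = N - 1 := by
        have h := natDegree_mul (X_sub_C_ne_zero α) hQ₁0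
        rw [← hQ₁, hQN, natDegree_X_sub_C] at h
        omega
      set b := pS Q₁ a with hbdef
      have hb0 : b ≠ 0 := by
        intro h
        have := hmin Q₁ hQ₁0 h
        omega
      have hrec : ∀ k, b (k + 1) = α * b k := by
        intro k
        have h1 : pS Q a = pS (X - C α) b := by rw [hQ₁, pS_mul]
        rw [hQa] at h1
        have h2 := congrFun h1.symm k
        have h3 : pS (X - C α) b = fun j => b (j + 1) - α * b j := by
          have hsub : pS (X - C α) b = pS X b - pS (C α) b := by
            simp only [pS, map_sub, LinearMap.sub_apply]
          rw [hsub]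
          funext j
          have hX : pS X b j = b (j + 1) := by
            rw [pS, aeval_X]
            rfl
          have hCα : pS (C α) b j = α * b j := by
            rw [pS_C]
            simp
          simp only [Pi.sub_apply, hX, hCα]
        rw [h3] at h2
        have h4 : b (k + 1) - α * b k = 0 := by have := h2.symm; simpa using this.symm
        linear_combination h4
      have hgeom : ∀ k, b k = α ^ k * b 0 := by
        intro k
        induction k with
        | zero => simp
        | succ n ih => rw [hrec n, ih, pow_succ]; ring
      have hb00 : b 0 ≠ 0 := by
        intro h
        apply hb0
        funext k
        rw [hgeom k, h, mul_zero]
        rfl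
      have htend : Filter.Tendsto b Filter.atTop (nhds 0) := by
        have hbk : b = fun k => ∑ i ∈ Finset.range (Q₁.natDegree + 1), Q₁.coeff i * a (k + i) := by
          funext k
          exact pS_apply_le Q₁ le_rfl a k
        rw [hbk]
        have h5 : Filter.Tendsto
            (fun k => ∑ i ∈ Finset.range (Q₁.natDegree + 1), Q₁.coeff i * a (k + i))
            Filter.atTop (nhds (∑ i ∈ Finset.range (Q₁.natDegree + 1), Q₁.coeff i * 0)) := by
          apply tendsto_finset_sum
          intro i _
          apply Filter.Tendsto.const_mul
          have := (a_tendsto_zero ha).comp (Filter.tendsto_add_atTop_nat i)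
          simpa [Function.comp_def] using this
        simpa using h5
      have hlt : ∀ᶠ k in Filter.atTop, ‖b k‖ < ‖b 0‖ := by
        have h6 := htend.norm
        simp only [norm_zero] at h6
        exact h6.eventually_lt_const (norm_pos_iff.mpr hb00)
      obtain ⟨k, hk⟩ := hlt.exists
      have hge : ‖b 0‖ ≤ ‖b k‖ := by
        rw [hgeom k, norm_mul, norm_pow]
        nlinarith [one_le_pow₀ hnα (n := k), norm_nonneg (b 0)]
      linarith
    have hdisj : A.natDegree = N - 1 ∨ B.natDegree = N := by
      by_contra hcon
      push_neg at hcon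
      obtain ⟨h1, h2⟩ := hcon
      have hAc : A.coeff (N - 1) = 0 :=
        coeff_eq_zero_of_natDegree_lt (lt_of_le_of_ne hAle h1)
      have hBc : B.coeff N = 0 := by
        have := lt_of_le_of_ne hBle h2
        exact coeff_eq_zero_of_natDegree_lt this
      have hBle' : B.natDegree ≤ N - 1 := by
        rw [natDegree_le_iff_coeff_eq_zero]
        intro m hm
        rcases eq_or_lt_of_le (show N ≤ m by omega) with hh | hh
        · rw [← hh]; exact hBc
        · exact coeff_eq_zero_of_natDegree_lt (by omega)
      have hco' : ∀ k, PowerSeries.coeff ((N - 1) + k) ((↑B : PowerSeries ℂ) * PowerSeries.mk a) = 0 := by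
        intro k
        rcases Nat.eq_zero_or_pos k with hk0 | hk0
        · rw [hk0, add_zero, hcoeq]
          exact hAc
        · rw [hcoeq]
          exact coeff_eq_zero_of_natDegree_lt (by omega)
      have hann : pS (reflect (N - 1) B) a = 0 := by
        funext k
        have := coeff_mul_F B hBle' a k
        rw [hco' k] at this
        exact this.symm
      have hrefl0 : reflect (N - 1) B ≠ 0 := fun h => hB0 (reflect_eq_zero_iff.mp h)
      have := hmin _ hrefl0 hann
      have h7 := natDegree_reflect_le (B := B) (N := N - 1) hBle'
      omega
    have hcop : IsCoprime A B := by
      by_contra hcop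
      have hgu : ¬ IsUnit (EuclideanDomain.gcd A B) := fun h =>
        hcop (EuclideanDomain.gcd_isUnit_iff.mp h)
      have hg0 : EuclideanDomain.gcd A B ≠ 0 := fun h =>
        hA0 (EuclideanDomain.gcd_eq_zero_iff.mp h).1
      have hgd : (EuclideanDomain.gcd A B).degree ≠ 0 := by
        intro h
        exact hgu (isUnit_iff_degree_eq_zero.mpr h)
      obtain ⟨z₀, hz₀⟩ := Complex.isAlgClosed.exists_root _ hgd
      have hAz : A.eval z₀ = 0 :=
        eval_eq_zero_of_dvd_of_eval_eq_zero (EuclideanDomain.gcd_dvd_left A B) hz₀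
      have hBz : B.eval z₀ = 0 :=
        eval_eq_zero_of_dvd_of_eval_eq_zero (EuclideanDomain.gcd_dvd_right A B) hz₀
      obtain ⟨A₁, hA₁⟩ := dvd_iff_isRoot.mpr hAz
      obtain ⟨B₁, hB₁⟩ := dvd_iff_isRoot.mpr hBz
      have hA₁0 : A₁ ≠ 0 := by
        rintro rfl
        rw [mul_zero] at hA₁
        exact hA0 hA₁
      have hB₁0 : B₁ ≠ 0 := by
        rintro rfl
        rw [mul_zero] at hB₁
        exact hB0 hB₁
      have hXz : ((X - C z₀ : ℂ[X]) : PowerSeries ℂ) ≠ 0 := fun h =>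
        X_sub_C_ne_zero z₀ (Polynomial.coe_eq_zero_iff.mp h)
      have hkey : (↑B₁ : PowerSeries ℂ) * PowerSeries.mk a = ↑A₁ := by
        apply mul_left_cancel₀ hXz
        calc ↑(X - C z₀ : ℂ[X]) * ((↑B₁ : PowerSeries ℂ) * PowerSeries.mk a)
            = (↑(X - C z₀ : ℂ[X]) * ↑B₁) * PowerSeries.mk a := by ring
          _ = (↑((X - C z₀) * B₁ : ℂ[X]) : PowerSeries ℂ) * PowerSeries.mk a := by
              rw [Polynomial.coe_mul]
          _ = (↑B : PowerSeries ℂ) * PowerSeries.mk a := by rw [← hB₁]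
          _ = ↑A := hPS
          _ = ↑((X - C z₀) * A₁ : ℂ[X]) := by rw [← hA₁]
          _ = ↑(X - C z₀ : ℂ[X]) * ↑A₁ := by rw [Polynomial.coe_mul]
      have hAd : A.natDegree = 1 + A₁.natDegree := by
        rw [hA₁, natDegree_mul (X_sub_C_ne_zero z₀) hA₁0, natDegree_X_sub_C]
      have hBd : B.natDegree = 1 + B₁.natDegree := by
        rw [hB₁, natDegree_mul (X_sub_C_ne_zero z₀) hB₁0, natDegree_X_sub_C]
      have hB₁le : B₁.natDegree ≤ N - 1 := by omega
      have hco₁ : ∀ k, PowerSeries.coeff ((N - 1) + k) ((↑B₁ : PowerSeries ℂ) * PowerSeries.mk a) = 0 := by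
        intro k
        rw [hkey, Polynomial.coeff_coe]
        exact coeff_eq_zero_of_natDegree_lt (by omega)
      have hann : pS (reflect (N - 1) B₁) a = 0 := by
        funext k
        have := coeff_mul_F B₁ hB₁le a k
        rw [hco₁ k] at this
        exact this.symm
      have hrefl0 : reflect (N - 1) B₁ ≠ 0 := fun h => hB₁0 (reflect_eq_zero_iff.mp h)
      have := hmin _ hrefl0 hann
      have h7 := natDegree_reflect_le (B := B₁) (N := N - 1) hB₁le
      omega
    refine ⟨A, B, hA0, hB1, hAle, hBle, hdisj, hcop, hBnv, ?_⟩
    intro z hz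
    have h1 := (hasSum_BF ha B hz).tsum_eq
    have h2 : (fun n => PowerSeries.coeff n ((↑B : PowerSeries ℂ) * PowerSeries.mk a) * z ^ n)
        = fun n => A.coeff n * z ^ n := funext fun n => by rw [hcoeq n]
    rw [h2, (hasSum_poly A z).tsum_eq] at h1
    rw [eq_div_iff (hBnv z (le_of_lt hz))]
    linear_combination -h1
  · -- backward direction
    rintro ⟨A, B, hA0, hB1, hAle, hBle, hdisj, hcop, hBnv, htsum⟩
    have hPS := hPS_of_tsum ha hBnv htsum
    set Q : ℂ[X] := reflect N B with hQdef
    have hcN : Q.coeff N = 1 := by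
      rw [hQdef, coeff_reflect, revAt_le le_rfl, Nat.sub_self, hB1]
    have hQN : Q.natDegree = N := by
      apply le_antisymm (natDegree_reflect_le hBle)
      apply le_natDegree_of_ne_zero
      rw [hcN]
      exact one_ne_zero
    have hQm : Q.Monic := by
      unfold Polynomial.Monic Polynomial.leadingCoeff
      rw [hQN]
      exact hcN
    have hQa : pS Q a = 0 := by
      have hrefl : reflect N B = Q := rfl
      funext k
      have h1 := coeff_mul_F B hBle a k
      rw [hrefl, hPS, Polynomial.coeff_coe] at h1
      rw [← h1, coeff_eq_zero_of_natDegree_lt (by omega)]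
      rfl
    have hmin : ∀ p : ℂ[X], p ≠ 0 → pS p a = 0 → Q.natDegree ≤ p.natDegree := by
      intro p hp0 hpa
      rw [hQN]
      exact natDegree_ge_of_ann hN hPS hA0 hB1 hdisj hcop hp0 hpa
    have := rank_V a Q hQm hQa hmin
    rw [this, hQN]
end
end

section
/- Trudinger type estimate: there is a constant C such that for every p ∈ [2, ∞) and every u ∈ H^{1/2}(S¹), ‖u‖_{L^p(S¹)} ≤ C √p ‖u‖_{H^{1/2}(S¹)}. -/
noncomputable section

open MeasureTheory Real AddCircle
open scoped ENNReal NNReal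

instance : Fact (0 < 2 * π) := ⟨by positivity⟩

namespace Stmt11Aux

open Filter Finset

/-- Dyadic block of frequencies: `2^j ≤ 1 + |k| < 2^(j+1)`. -/
def B (j : ℕ) : Finset ℤ :=
  (Finset.Icc (-(2 ^ (j + 1) : ℤ)) (2 ^ (j + 1))).filter
    (fun k => (2 : ℤ) ^ j ≤ 1 + |k| ∧ 1 + |k| < 2 ^ (j + 1))

lemma mem_B {j : ℕ} {k : ℤ} :
    k ∈ B j ↔ (2 : ℤ) ^ j ≤ 1 + |k| ∧ 1 + |k| < 2 ^ (j + 1) := by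
  simp only [B, Finset.mem_filter, Finset.mem_Icc, and_iff_right_iff_imp]
  rintro ⟨h1, h2⟩
  have h3 := neg_abs_le k
  have h4 := le_abs_self k
  constructor <;> linarith

lemma B_card (j : ℕ) : (B j).card ≤ 2 ^ (j + 3) := by
  have h1 : (B j).card ≤ (Finset.Icc (-(2 ^ (j + 1) : ℤ)) (2 ^ (j + 1))).card :=
    Finset.card_le_card (Finset.filter_subset _ _)
  rw [Int.card_Icc] at h1
  have h2 : ((2 ^ (j + 1) : ℤ) + 1 - -(2 ^ (j + 1))).toNat = 2 ^ (j + 2) + 1 := by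
    have : ((2 ^ (j + 1) : ℤ) + 1 - -(2 ^ (j + 1))) = (2 ^ (j + 2) + 1 : ℕ) := by
      push_cast; ring
    rw [this, Int.toNat_natCast]
  rw [h2] at h1
  calc (B j).card ≤ 2 ^ (j + 2) + 1 := h1
    _ ≤ 2 ^ (j + 3) := by
        have : (2:ℕ) ^ (j + 3) = 2 ^ (j + 2) + 2 ^ (j + 2) := by ring
        have h3 : 1 ≤ (2:ℕ) ^ (j + 2) := Nat.one_le_two_pow
        omega

lemma B_cover (k : ℤ) : ∃ j, k ∈ B j := by
  set n : ℕ := (1 + |k|).toNat with hn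
  have hn1 : 1 ≤ n := by
    have := abs_nonneg k
    omega
  have hnk : (n : ℤ) = 1 + |k| := by
    have := abs_nonneg k
    omega
  refine ⟨Nat.log 2 n, ?_⟩
  rw [mem_B]
  constructor
  · have := Nat.pow_log_le_self 2 (x := n) (by omega)
    have h2 : ((2 ^ Nat.log 2 n : ℕ) : ℤ) ≤ (n : ℤ) := by exact_mod_cast this
    rw [hnk] at h2
    exact_mod_cast h2
  · have := Nat.lt_pow_succ_log_self (b := 2) (by norm_num) n
    have h2 : ((n : ℤ)) < ((2 ^ (Nat.log 2 n + 1) : ℕ) : ℤ) := by exact_mod_cast this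
    rw [hnk] at h2
    exact_mod_cast h2

lemma B_disjoint {i j : ℕ} (hij : i ≠ j) : Disjoint (B i) (B j) := by
  rw [Finset.disjoint_left]
  intro k hki hkj
  rw [mem_B] at hki hkj
  rcases lt_or_gt_of_ne hij with h | h
  · have : (2 : ℤ) ^ (i + 1) ≤ 2 ^ j := pow_le_pow_right₀ one_le_two (by omega)
    linarith [hki.2, hkj.1]
  · have : (2 : ℤ) ^ (j + 1) ≤ 2 ^ i := pow_le_pow_right₀ one_le_two (by omega)
    linarith [hki.1, hkj.2]

/-- coeFn of a finite sum in Lp. -/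
lemma coeFn_sum_ae {α : Type*} [MeasurableSpace α] {μ : Measure α} {q : ℝ≥0∞}
    {ι : Type*} (s : Finset ι) (f : ι → Lp ℂ q μ) (g : ι → α → ℂ)
    (h : ∀ i ∈ s, ⇑(f i) =ᵐ[μ] g i) :
    ⇑(∑ i ∈ s, f i) =ᵐ[μ] fun x => ∑ i ∈ s, g i x := by
  classical
  induction s using Finset.induction with
  | empty => simp only [Finset.sum_empty]; exact Lp.coeFn_zero ℂ q μ
  | insert a s hns ih =>
    have h1 : ⇑(f a + ∑ i ∈ s, f i) =ᵐ[μ] ⇑(f a) + ⇑(∑ i ∈ s, f i) := Lp.coeFn_add _ _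
    rw [Finset.sum_insert hns]
    refine h1.trans ?_
    have h2 := ih (fun i hi => h i (Finset.mem_insert_of_mem hi))
    filter_upwards [h2, h a (Finset.mem_insert_self a s)] with x hx hxa
    rw [Finset.sum_insert hns, Pi.add_apply, hx, hxa]

/-- Interpolation: if `‖f‖ ≤ M` pointwise, then
`‖f‖_p ≤ M^(1-2/p) ‖f‖_2^(2/p)`. -/
lemma interp {α : Type*} [MeasurableSpace α] {μ : Measure α} {f : α → ℂ}
    {M p : ℝ} (hM : 0 ≤ M) (hp : 2 ≤ p) (hbd : ∀ x, ‖f x‖ ≤ M) :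
    eLpNorm f (ENNReal.ofReal p) μ ≤
      ENNReal.ofReal M ^ (1 - 2 / p) * eLpNorm f 2 μ ^ (2 / p) := by
  have hp0 : 0 < p := by linarith
  have hq0 : ENNReal.ofReal p ≠ 0 := by
    simp only [ne_eq, ENNReal.ofReal_eq_zero, not_le]; linarith
  have hqt : ENNReal.ofReal p ≠ ⊤ := ENNReal.ofReal_ne_top
  have htr : (ENNReal.ofReal p).toReal = p := ENNReal.toReal_ofReal hp0.le
  have hMt : ENNReal.ofReal M ^ (p - 2) ≠ ⊤ :=
    ENNReal.rpow_ne_top_of_nonneg (by linarith) ENNReal.ofReal_ne_top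
  have h2 : eLpNorm f 2 μ = (∫⁻ x, (‖f x‖₊ : ℝ≥0∞) ^ (2 : ℝ) ∂μ) ^ (1 / (2 : ℝ)) := by
    rw [eLpNorm_eq_lintegral_rpow_enorm_toReal (by norm_num) (by norm_num)]
    simp only [enorm_eq_nnnorm]
    norm_num
  have key : ∀ x, (‖f x‖₊ : ℝ≥0∞) ^ p ≤
      ENNReal.ofReal M ^ (p - 2) * (‖f x‖₊ : ℝ≥0∞) ^ (2 : ℝ) := by
    intro x
    have hfx : (‖f x‖₊ : ℝ≥0∞) ≤ ENNReal.ofReal M := by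
      rw [← enorm_eq_nnnorm, ← ofReal_norm]
      exact ENNReal.ofReal_le_ofReal (hbd x)
    calc (‖f x‖₊ : ℝ≥0∞) ^ p
        = (‖f x‖₊ : ℝ≥0∞) ^ (p - 2) * (‖f x‖₊ : ℝ≥0∞) ^ (2 : ℝ) := by
          rw [← ENNReal.rpow_add_of_nonneg _ _ (by linarith) (by norm_num)]
          norm_num
      _ ≤ ENNReal.ofReal M ^ (p - 2) * (‖f x‖₊ : ℝ≥0∞) ^ (2 : ℝ) :=
          mul_le_mul_left (ENNReal.rpow_le_rpow hfx (by linarith)) _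
  rw [eLpNorm_eq_lintegral_rpow_enorm_toReal hq0 hqt, htr]
  calc (∫⁻ x, (‖f x‖₊ : ℝ≥0∞) ^ p ∂μ) ^ (1 / p)
      ≤ (∫⁻ x, ENNReal.ofReal M ^ (p - 2) * (‖f x‖₊ : ℝ≥0∞) ^ (2 : ℝ) ∂μ) ^ (1 / p) := by
        gcongr
        exact key _
    _ = (ENNReal.ofReal M ^ (p - 2) * ∫⁻ x, (‖f x‖₊ : ℝ≥0∞) ^ (2 : ℝ) ∂μ) ^ (1 / p) := by
        rw [lintegral_const_mul' _ _ hMt]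
    _ = ENNReal.ofReal M ^ ((p - 2) * (1 / p)) *
          (∫⁻ x, (‖f x‖₊ : ℝ≥0∞) ^ (2 : ℝ) ∂μ) ^ (1 / p) := by
        rw [ENNReal.mul_rpow_of_nonneg _ _ (by positivity), ← ENNReal.rpow_mul]
    _ = ENNReal.ofReal M ^ (1 - 2 / p) * eLpNorm f 2 μ ^ (2 / p) := by
        congr 1
        · congr 1
          field_simp
        · rw [h2, ← ENNReal.rpow_mul]
          congr 1
          field_simp

end Stmt11Aux

open Stmt11Aux Filter Topology

set_option maxHeartbeats 2000000 in
/-- **Trudinger-type estimate.** There is a constant `C` such that for every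
`p ∈ [2, ∞)` and every `u ∈ H^{1/2}(S¹)` (with `‖u‖²_{H^{1/2}} = Σ_k (1+|k|)|û(k)|²`),
`‖u‖_{L^p} ≤ C √p ‖u‖_{H^{1/2}}`, the `L^p` norm being taken with respect to the
normalized Haar measure on the circle. -/
theorem stmt11 :
    ∃ C : ℝ, 0 < C ∧
      ∀ (p : ℝ), 2 ≤ p →
        ∀ u : AddCircle (2 * π) → ℂ, MemLp u 2 haarAddCircle →
          (Summable fun k : ℤ => (1 + |(k : ℝ)|) * ‖fourierCoeff u k‖ ^ 2) →
          eLpNorm u (ENNReal.ofReal p) haarAddCircle ≤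
            ENNReal.ofReal (C * Real.sqrt p *
              Real.sqrt (∑' k : ℤ, (1 + |(k : ℝ)|) * ‖fourierCoeff u k‖ ^ 2)) := by
  refine ⟨4, by norm_num, ?_⟩
  intro p hp u hu hw_sum
  have hp0 : 0 < p := by linarith
  set c : ℤ → ℂ := fun k => fourierCoeff u k with hc
  set w : ℤ → ℝ := fun k : ℤ => (1 + |(k : ℝ)|) * ‖fourierCoeff u k‖ ^ 2 with hwdef
  have hw0 : ∀ k, 0 ≤ w k := fun k => by positivity
  set W : ℝ := ∑' k : ℤ, w k with hW
  have hW0 : 0 ≤ W := tsum_nonneg hw0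
  -- blocks as functions
  set Δ : ℕ → AddCircle (2 * π) → ℂ := fun j x => ∑ k ∈ B j, c k • fourier k x with hΔ
  have hΔcont : ∀ j, Continuous (Δ j) := fun j =>
    continuous_finset_sum _ fun k _ => ((map_continuous (fourier k)).const_smul (c k))
  -- blocks as L² elements
  set g : ℕ → Lp ℂ 2 (haarAddCircle (T := 2 * π)) := fun j => ∑ k ∈ B j, c k • fourierLp 2 k
    with hgdef
  have hsmul_ae : ∀ k : ℤ, ⇑(c k • fourierLp (T := 2 * π) 2 k)
      =ᵐ[haarAddCircle] fun x => c k • fourier k x := by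
    intro k
    refine (Lp.coeFn_smul _ _).trans ?_
    filter_upwards [coeFn_fourierLp (T := 2 * π) 2 k] with x hx
    rw [Pi.smul_apply, hx]
  have hg_ae : ∀ j, ⇑(g j) =ᵐ[haarAddCircle] Δ j := fun j =>
    coeFn_sum_ae (B j) _ (fun k x => c k • fourier k x) (fun k _ => hsmul_ae k)
  have hgnorm : ∀ j, ‖g j‖ ^ 2 = ∑ k ∈ B j, ‖c k‖ ^ 2 := by
    intro j
    calc ‖g j‖ ^ 2 = RCLike.re (inner (𝕜 := ℂ) (g j) (g j)) := (inner_self_eq_norm_sq _).symm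
      _ = RCLike.re (∑ k ∈ B j, (starRingEnd ℂ) (c k) * c k) := by
          rw [hgdef, orthonormal_fourier.inner_sum]
      _ = ∑ k ∈ B j, ‖c k‖ ^ 2 := by
          rw [map_sum]
          refine Finset.sum_congr rfl fun k _ => ?_
          rw [mul_comm, Complex.mul_conj]
          rw [Complex.normSq_eq_norm_sq]
          exact RCLike.ofReal_re _
  have hΔ2 : ∀ j, eLpNorm (Δ j) 2 haarAddCircle = ENNReal.ofReal ‖g j‖ := by
    intro j
    rw [← eLpNorm_congr_ae (hg_ae j), Lp.norm_def,
      ENNReal.ofReal_toReal (Lp.eLpNorm_ne_top _)]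
  have hfour : ∀ (k : ℤ) (x : AddCircle (2 * π)), ‖fourier k x‖ = 1 := by
    intro k x
    rw [fourier_apply]
    exact Circle.norm_coe _
  have hΔbd : ∀ j x, ‖Δ j x‖ ≤ ∑ k ∈ B j, ‖c k‖ := by
    intro j x
    refine (norm_sum_le _ _).trans_eq ?_
    refine Finset.sum_congr rfl fun k _ => ?_
    rw [norm_smul, hfour k x, mul_one]
  -- block energies
  set A : ℕ → ℝ := fun j => ∑ k ∈ B j, w k with hA
  have hA0 : ∀ j, 0 ≤ A j := fun j => Finset.sum_nonneg fun k _ => hw0 k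
  have hb_le : ∀ j, ∑ k ∈ B j, ‖c k‖ ^ 2 ≤ ((2 : ℝ) ^ j)⁻¹ * A j := by
    intro j
    rw [hA, Finset.mul_sum]
    refine Finset.sum_le_sum fun k hk => ?_
    have h2j : (2 : ℝ) ^ j ≤ 1 + |(k : ℝ)| := by
      have h := (mem_B.mp hk).1
      have h' : ((2 : ℤ) ^ j : ℝ) ≤ ((1 + |k| : ℤ) : ℝ) := by exact_mod_cast h
      push_cast at h'
      exact h'
    have hpow : (0:ℝ) < (2:ℝ) ^ j := by positivity
    rw [inv_mul_eq_div, le_div_iff₀ hpow]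
    have hc0 : (0:ℝ) ≤ ‖c k‖ ^ 2 := by positivity
    calc ‖c k‖ ^ 2 * 2 ^ j ≤ ‖c k‖ ^ 2 * (1 + |(k:ℝ)|) := by
          exact mul_le_mul_of_nonneg_left h2j hc0
      _ = w k := by rw [hwdef]; ring
  -- the per-block estimate
  have hq1 : (1 : ℝ≥0∞) ≤ ENNReal.ofReal p := ENNReal.one_le_ofReal.mpr (by linarith)
  have hblock : ∀ j, eLpNorm (Δ j) (ENNReal.ofReal p) haarAddCircle ≤
      ENNReal.ofReal ((∑ k ∈ B j, ‖c k‖) ^ (1 - 2 / p) * ‖g j‖ ^ (2 / p)) := by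
    intro j
    have hM0 : (0:ℝ) ≤ ∑ k ∈ B j, ‖c k‖ := Finset.sum_nonneg fun k _ => norm_nonneg _
    have h1 := interp (f := Δ j) (μ := haarAddCircle) hM0 hp (hΔbd j)
    rw [hΔ2 j] at h1
    refine h1.trans_eq ?_
    have hθ1 : 2 / p ≤ 1 := (div_le_one hp0).mpr hp
    have hθ0 : (0:ℝ) ≤ 2 / p := by positivity
    rw [ENNReal.ofReal_mul (by positivity), ← ENNReal.ofReal_rpow_of_nonneg hM0 (by linarith),
      ← ENNReal.ofReal_rpow_of_nonneg (norm_nonneg _) hθ0]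
  have hreal : ∀ j : ℕ, (∑ k ∈ B j, ‖c k‖) ^ (1 - 2 / p) * ‖g j‖ ^ (2 / p) ≤
      2 * Real.sqrt 2 * (2 : ℝ) ^ (-(j : ℝ) / p) * Real.sqrt (A j) := by
    intro j
    have hθ1 : 2 / p ≤ 1 := (div_le_one hp0).mpr hp
    have hθ0 : (0:ℝ) ≤ 2 / p := by positivity
    have hM0 : (0:ℝ) ≤ ∑ k ∈ B j, ‖c k‖ := Finset.sum_nonneg fun k _ => norm_nonneg _
    have hβ0 : (0:ℝ) ≤ ‖g j‖ := norm_nonneg _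
    have hCS : (∑ k ∈ B j, ‖c k‖) ^ 2 ≤ ((B j).card : ℝ) * ‖g j‖ ^ 2 := by
      have h := Finset.sum_mul_sq_le_sq_mul_sq (B j) (fun _ => (1:ℝ)) (fun k => ‖c k‖)
      simpa [hgnorm j] using h
    have hM_le : (∑ k ∈ B j, ‖c k‖) ≤ Real.sqrt ((B j).card) * ‖g j‖ := by
      rw [show (∑ k ∈ B j, ‖c k‖) = Real.sqrt ((∑ k ∈ B j, ‖c k‖)^2) from (Real.sqrt_sq hM0).symm]
      calc Real.sqrt ((∑ k ∈ B j, ‖c k‖)^2) ≤ Real.sqrt (((B j).card : ℝ) * ‖g j‖^2) :=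
            Real.sqrt_le_sqrt hCS
        _ = Real.sqrt ((B j).card) * ‖g j‖ := by
            rw [Real.sqrt_mul (Nat.cast_nonneg _), Real.sqrt_sq hβ0]
    have hcard : Real.sqrt ((B j).card) ≤ (2:ℝ) ^ (((j:ℝ)+3)/2) := by
      have h1 : ((B j).card : ℝ) ≤ (2:ℝ) ^ ((j:ℝ)+3) := by
        have h2 : ((B j).card : ℝ) ≤ ((2^(j+3) : ℕ) : ℝ) := by exact_mod_cast B_card j
        refine h2.trans_eq ?_
        rw [show ((j:ℝ)+3) = ((j+3 : ℕ) : ℝ) by push_cast; ring, Real.rpow_natCast]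
        push_cast
        ring
      calc Real.sqrt ((B j).card) ≤ Real.sqrt ((2:ℝ) ^ ((j:ℝ)+3)) := Real.sqrt_le_sqrt h1
        _ = (2:ℝ) ^ (((j:ℝ)+3)/2) := by
            rw [Real.sqrt_eq_rpow, ← Real.rpow_mul (by norm_num)]
            ring_nf
    have hβ_le : ‖g j‖ ≤ (2:ℝ) ^ (-(j:ℝ)/2) * Real.sqrt (A j) := by
      rw [show ‖g j‖ = Real.sqrt (∑ k ∈ B j, ‖c k‖^2) from by rw [← hgnorm j, Real.sqrt_sq hβ0]]
      calc Real.sqrt (∑ k ∈ B j, ‖c k‖^2) ≤ Real.sqrt (((2:ℝ)^j)⁻¹ * A j) :=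
            Real.sqrt_le_sqrt (hb_le j)
        _ = (2:ℝ) ^ (-(j:ℝ)/2) * Real.sqrt (A j) := by
            rw [Real.sqrt_mul (by positivity), ← Real.rpow_natCast 2 j,
              ← Real.rpow_neg (by norm_num), Real.sqrt_eq_rpow, ← Real.rpow_mul (by norm_num)]
            ring_nf
    calc (∑ k ∈ B j, ‖c k‖) ^ (1 - 2/p) * ‖g j‖ ^ (2/p)
        ≤ (Real.sqrt ((B j).card) * ‖g j‖) ^ (1 - 2/p) * ‖g j‖ ^ (2/p) := by
          refine mul_le_mul_of_nonneg_right ?_ (Real.rpow_nonneg hβ0 _)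
          exact Real.rpow_le_rpow hM0 hM_le (by linarith)
      _ = Real.sqrt ((B j).card) ^ (1 - 2/p) * ‖g j‖ := by
          rw [Real.mul_rpow (Real.sqrt_nonneg _) hβ0, mul_assoc,
            ← Real.rpow_add_of_nonneg hβ0 (by linarith) hθ0]
          norm_num
      _ ≤ ((2:ℝ) ^ (((j:ℝ)+3)/2)) ^ (1 - 2/p) * ((2:ℝ) ^ (-(j:ℝ)/2) * Real.sqrt (A j)) := by
          refine mul_le_mul ?_ hβ_le hβ0 (Real.rpow_nonneg (by positivity) _)
          exact Real.rpow_le_rpow (Real.sqrt_nonneg _) hcard (by linarith)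
      _ = (2:ℝ) ^ ((((j:ℝ)+3)/2) * (1 - 2/p) + (-(j:ℝ)/2)) * Real.sqrt (A j) := by
          rw [← Real.rpow_mul (by norm_num), Real.rpow_add (by norm_num : (0:ℝ) < 2)]
          ring
      _ ≤ (2:ℝ) ^ (3/2 - (j:ℝ)/p) * Real.sqrt (A j) := by
          have hexp : (((j:ℝ)+3)/2) * (1 - 2/p) + (-(j:ℝ)/2) = 3/2 - (j:ℝ)/p - 3/p := by
            field_simp
            ring
          rw [hexp]
          have h3p : (0:ℝ) ≤ 3/p := by positivity
          refine mul_le_mul_of_nonneg_right ?_ (Real.sqrt_nonneg _)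
          exact Real.rpow_le_rpow_of_exponent_le one_le_two (by linarith)
      _ = 2 * Real.sqrt 2 * (2:ℝ) ^ (-(j:ℝ)/p) * Real.sqrt (A j) := by
          rw [show (3/2 - (j:ℝ)/p) = 1 + 1/2 + (-(j:ℝ)/p) by ring,
            Real.rpow_add (by norm_num : (0:ℝ) < 2), Real.rpow_add (by norm_num : (0:ℝ) < 2),
            Real.rpow_one, ← Real.sqrt_eq_rpow]
  -- partial sums
  set S : ℕ → AddCircle (2 * π) → ℂ := fun n x => ∑ j ∈ Finset.range (n + 1), Δ j x with hS
  have hSmeas : ∀ n, AEStronglyMeasurable (S n) (haarAddCircle (T := 2 * π)) := fun n =>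
    (continuous_finset_sum _ fun j _ => hΔcont j).aestronglyMeasurable
  -- L² convergence of partial sums
  have hL2tend : Tendsto (fun n => eLpNorm (S n - u) 2 haarAddCircle) atTop (𝓝 0) := by
    set F : Lp ℂ 2 (haarAddCircle (T := 2 * π)) := hu.toLp u with hF
    have hcoef : ∀ k : ℤ, fourierCoeff (F : AddCircle (2 * π) → ℂ) k = c k := by
      intro k
      rw [hc]
      simp only [fourierCoeff]
      refine integral_congr_ae ((MemLp.coeFn_toLp hu).mono fun x hx => ?_)
      simp only
      rw [hF, hx]
    have hHasSum := hasSum_fourier_series_L2 F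
    simp_rw [hcoef] at hHasSum
    set U : ℕ → Finset ℤ := fun n => (Finset.range (n + 1)).biUnion B with hU
    have hUmono : Monotone U := fun a b hab =>
      Finset.biUnion_subset_biUnion_of_subset_left _ (Finset.range_subset_range.mpr (by omega))
    have hUcover : ∀ k : ℤ, ∃ n, k ∈ U n := by
      intro k
      obtain ⟨j, hj⟩ := B_cover k
      exact ⟨j, Finset.mem_biUnion.mpr ⟨j, Finset.self_mem_range_succ j, hj⟩⟩
    have hGtend : Tendsto (fun n => ∑ k ∈ U n, c k • fourierLp (T := 2 * π) 2 k) atTop (𝓝 F) :=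
      hHasSum.comp (tendsto_atTop_finset_of_monotone hUmono hUcover)
    have hG_ae : ∀ n, ⇑(∑ k ∈ U n, c k • fourierLp (T := 2 * π) 2 k)
        =ᵐ[haarAddCircle] S n := by
      intro n
      refine (coeFn_sum_ae (U n) _ (fun k x => c k • fourier k x)
        (fun k _ => hsmul_ae k)).trans ?_
      refine Filter.EventuallyEq.of_eq (funext fun x => ?_)
      rw [hU, Finset.sum_biUnion (fun i _ j _ hij => B_disjoint hij)]
    have h1 : ∀ n, eLpNorm (S n - u) 2 haarAddCircle =
        ENNReal.ofReal ‖(∑ k ∈ U n, c k • fourierLp (T := 2 * π) 2 k) - F‖ := by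
      intro n
      rw [Lp.norm_def, ENNReal.ofReal_toReal (Lp.eLpNorm_ne_top _)]
      refine eLpNorm_congr_ae ?_
      filter_upwards [Lp.coeFn_sub (∑ k ∈ U n, c k • fourierLp (T := 2 * π) 2 k) F,
        hG_ae n, MemLp.coeFn_toLp hu] with x hx1 hx2 hx3
      rw [Pi.sub_apply, hx1, Pi.sub_apply, hx2, hx3]
    simp_rw [h1]
    rw [show (0 : ℝ≥0∞) = ENNReal.ofReal 0 by simp]
    apply ENNReal.tendsto_ofReal
    exact tendsto_iff_norm_sub_tendsto_zero.mp hGtend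
  have hmeasconv : TendstoInMeasure haarAddCircle S atTop u :=
    tendstoInMeasure_of_tendsto_eLpNorm (by norm_num : (2 : ℝ≥0∞) ≠ 0) hSmeas
      hu.aestronglyMeasurable hL2tend
  obtain ⟨φ, hφ, hae⟩ := hmeasconv.exists_seq_tendsto_ae
  have hFatou := MeasureTheory.Lp.eLpNorm_lim_le_liminf_eLpNorm (μ := haarAddCircle)
    (p := ENNReal.ofReal p) (f := fun n => S (φ n)) (fun n => hSmeas (φ n)) u hae
  -- bound for each partial sum
  have hSbound : ∀ n, eLpNorm (S n) (ENNReal.ofReal p) haarAddCircle ≤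
      ENNReal.ofReal (4 * Real.sqrt p * Real.sqrt W) := by
    intro n
    have h1 : eLpNorm (S n) (ENNReal.ofReal p) haarAddCircle ≤
        ∑ j ∈ Finset.range (n + 1), eLpNorm (Δ j) (ENNReal.ofReal p) haarAddCircle := by
      have h2 := eLpNorm_sum_le (μ := haarAddCircle) (f := Δ) (s := Finset.range (n + 1))
        (fun j _ => (hΔcont j).aestronglyMeasurable) hq1
      have h3 : S n = ∑ j ∈ Finset.range (n + 1), Δ j := by
        funext x
        rw [hS]
        simp [Finset.sum_apply]
      rw [h3]
      exact h2
    have h3 : (∑ j ∈ Finset.range (n + 1), eLpNorm (Δ j) (ENNReal.ofReal p) haarAddCircle) ≤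
        ENNReal.ofReal (∑ j ∈ Finset.range (n + 1),
          2 * Real.sqrt 2 * (2:ℝ) ^ (-(j:ℝ)/p) * Real.sqrt (A j)) := by
      rw [ENNReal.ofReal_sum_of_nonneg (fun j _ => by positivity)]
      exact Finset.sum_le_sum fun j _ => (hblock j).trans (ENNReal.ofReal_le_ofReal (hreal j))
    refine h1.trans (h3.trans (ENNReal.ofReal_le_ofReal ?_))
    -- the geometric series bound
    set r : ℝ := (2:ℝ) ^ (-(2/p)) with hr
    have hr0 : (0:ℝ) ≤ r := Real.rpow_nonneg (by norm_num) _
    have hr1 : r < 1 :=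
      Real.rpow_lt_one_of_one_lt_of_neg one_lt_two (neg_lt_zero.mpr (by positivity))
    have hgeom : ∑ j ∈ Finset.range (n + 1), r ^ j ≤ 2 * p := by
      have hsumr : ∑' j : ℕ, r ^ j = (1 - r)⁻¹ := tsum_geometric_of_lt_one hr0 hr1
      have h4 : ∑ j ∈ Finset.range (n + 1), r ^ j ≤ ∑' j : ℕ, r ^ j :=
        (summable_geometric_of_lt_one hr0 hr1).sum_le_tsum _ (fun j _ => pow_nonneg hr0 j)
      rw [hsumr] at h4
      refine h4.trans ?_
      have hlog2 : (1:ℝ)/2 ≤ Real.log 2 := by linarith [Real.log_two_gt_d9]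
      have hlog2' : Real.log 2 ≤ 1 := by linarith [Real.log_two_lt_d9]
      set sv : ℝ := 2/p * Real.log 2 with hsv
      have hs0 : 0 ≤ sv := by positivity
      have hs1 : 1 ≤ p * sv := by
        rw [hsv, show p * (2/p * Real.log 2) = 2 * Real.log 2 by field_simp]
        linarith
      have hs2 : sv ≤ 1 := by
        have h2p1 : 2/p ≤ 1 := (div_le_one hp0).mpr hp
        calc sv = 2/p * Real.log 2 := rfl
          _ ≤ 1 * 1 := mul_le_mul h2p1 hlog2' (Real.log_nonneg one_le_two) one_pos.le
          _ = 1 := mul_one 1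
      have hrs : r = (Real.exp sv)⁻¹ := by
        rw [hr, Real.rpow_def_of_pos (by norm_num : (0:ℝ) < 2), ← Real.exp_neg]
        congr 1
        rw [hsv]
        ring
      have hexp : sv + 1 ≤ Real.exp sv := Real.add_one_le_exp sv
      have hrle : r ≤ (sv + 1)⁻¹ := by
        rw [hrs]
        exact inv_anti₀ (by linarith) hexp
      have h5 : (sv + 1)⁻¹ ≤ 1 - 1/(2*p) := by
        have h6 : 2*p ≤ (2*p - 1)*(sv + 1) := by
          nlinarith [mul_nonneg hs0 (by linarith : (0:ℝ) ≤ p - 1), hs1]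
        rw [show (1 : ℝ) - 1/(2*p) = (2*p - 1)/(2*p) by field_simp, inv_eq_one_div,
          div_le_div_iff₀ (by linarith) (by linarith)]
        linarith
      have h1r : 1/(2*p) ≤ 1 - r := by linarith [hrle.trans h5]
      calc (1 - r)⁻¹ ≤ (1/(2*p))⁻¹ := inv_anti₀ (by positivity) h1r
        _ = 2*p := by rw [one_div, inv_inv]
    -- the total energy bound
    have hA_W : ∑ j ∈ Finset.range (n + 1), A j ≤ W := by
      simp only [hA]
      rw [← Finset.sum_biUnion (fun i _ j _ hij => B_disjoint hij)]
      exact hw_sum.sum_le_tsum _ (fun k _ => hw0 k)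
    -- Cauchy–Schwarz over blocks
    have hCSsum : ∑ j ∈ Finset.range (n + 1), (2:ℝ) ^ (-(j:ℝ)/p) * Real.sqrt (A j)
        ≤ Real.sqrt (2*p) * Real.sqrt W := by
      have h0 : (0:ℝ) ≤ ∑ j ∈ Finset.range (n + 1), (2:ℝ) ^ (-(j:ℝ)/p) * Real.sqrt (A j) :=
        Finset.sum_nonneg fun j _ => by positivity
      have hcs := Finset.sum_mul_sq_le_sq_mul_sq (Finset.range (n + 1))
        (fun j => (2:ℝ) ^ (-(j:ℝ)/p)) (fun j => Real.sqrt (A j))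
      have hf2 : ∑ j ∈ Finset.range (n + 1), ((2:ℝ) ^ (-(j:ℝ)/p)) ^ 2 ≤ 2*p := by
        refine le_trans (le_of_eq (Finset.sum_congr rfl fun j _ => ?_)) hgeom
        rw [← Real.rpow_natCast ((2:ℝ) ^ (-(j:ℝ)/p)) 2, ← Real.rpow_mul (by norm_num),
          hr, ← Real.rpow_natCast ((2:ℝ) ^ (-(2/p))) j, ← Real.rpow_mul (by norm_num)]
        congr 1
        push_cast
        ring
      have hg2 : ∑ j ∈ Finset.range (n + 1), (Real.sqrt (A j)) ^ 2 ≤ W :=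
        le_trans (le_of_eq (Finset.sum_congr rfl fun j _ => Real.sq_sqrt (hA0 j))) hA_W
      calc ∑ j ∈ Finset.range (n + 1), (2:ℝ) ^ (-(j:ℝ)/p) * Real.sqrt (A j)
          = Real.sqrt ((∑ j ∈ Finset.range (n + 1), (2:ℝ) ^ (-(j:ℝ)/p) * Real.sqrt (A j)) ^ 2) :=
            (Real.sqrt_sq h0).symm
        _ ≤ Real.sqrt ((2*p) * W) := by
            apply Real.sqrt_le_sqrt
            refine hcs.trans ?_
            have hW' : (0:ℝ) ≤ ∑ j ∈ Finset.range (n + 1), Real.sqrt (A j) ^ 2 :=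
              Finset.sum_nonneg fun j _ => by positivity
            exact mul_le_mul hf2 hg2 hW' (by linarith)
        _ = Real.sqrt (2*p) * Real.sqrt W := Real.sqrt_mul (by linarith) W
    have h2s : Real.sqrt 2 * Real.sqrt 2 = 2 := Real.mul_self_sqrt (by norm_num)
    calc ∑ j ∈ Finset.range (n + 1), 2 * Real.sqrt 2 * (2:ℝ) ^ (-(j:ℝ)/p) * Real.sqrt (A j)
        = 2 * Real.sqrt 2 * ∑ j ∈ Finset.range (n + 1), (2:ℝ) ^ (-(j:ℝ)/p) * Real.sqrt (A j) := by
          rw [Finset.mul_sum]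
          exact Finset.sum_congr rfl fun j _ => by ring
      _ ≤ 2 * Real.sqrt 2 * (Real.sqrt (2*p) * Real.sqrt W) :=
          mul_le_mul_of_nonneg_left hCSsum (by positivity)
      _ = 4 * Real.sqrt p * Real.sqrt W := by
          rw [Real.sqrt_mul (by norm_num : (0:ℝ) ≤ 2) p,
            show 2 * Real.sqrt 2 * (Real.sqrt 2 * Real.sqrt p * Real.sqrt W)
              = 2 * (Real.sqrt 2 * Real.sqrt 2) * (Real.sqrt p * Real.sqrt W) by ring, h2s]
          ring
  refine hFatou.trans ?_
  exact Filter.liminf_le_of_frequently_le'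
    (Filter.Frequently.of_forall fun n => hSbound (φ n))
end
end

section
/- Nonlinear Gronwall lemma: if f : [0,∞) → [0,∞) is continuous, nondecreasing, and satisfies f(t) ≤ f(0) + A ∫₀^t log(2 + f(t')) f(t') dt' for all t ≥ 0, then 2 + f(t) ≤ (2 + f(0))^{exp(At)}. -/
open Real Set

/-- **nonlinear Gronwall lemma.** If `f : [0,∞) → [0,∞)` is continuous,
nondecreasing, and satisfies `f(t) ≤ f(0) + A ∫₀ᵗ log(2 + f) f` for all `t ≥ 0` with
`A > 0`, then `2 + f(t) ≤ (2 + f(0))^{exp(At)}`. -/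
theorem stmt13 (A : ℝ) (hA : 0 < A) (f : ℝ → ℝ)
    (hpos : ∀ t, 0 ≤ t → 0 ≤ f t)
    (hcont : ContinuousOn f (Ici 0))
    (hmono : MonotoneOn f (Ici 0))
    (hineq : ∀ t, 0 ≤ t →
      f t ≤ f 0 + A * ∫ t' in (0 : ℝ)..t, Real.log (2 + f t') * f t') :
    ∀ t, 0 ≤ t → 2 + f t ≤ (2 + f 0) ^ Real.exp (A * t) := by
  intro t₀ ht₀
  rcases eq_or_lt_of_le ht₀ with h | ht₀pos
  · rw [← h, mul_zero, Real.exp_zero, Real.rpow_one]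
  set g : ℝ → ℝ := fun s => Real.log (2 + f s) * f s with hg_def
  set F : ℝ → ℝ := fun s => f 0 + A * ∫ s' in (0:ℝ)..s, g s' with hF_def
  have hf0 : 0 ≤ f 0 := hpos 0 le_rfl
  -- continuity of g on Ici 0
  have h2f : ∀ s ∈ Ici (0:ℝ), (0:ℝ) < 2 + f s := fun s hs => by
    have := hpos s hs; linarith
  have hg_cont : ContinuousOn g (Ici 0) := by
    exact ((continuousOn_const.add hcont).log (fun s hs => ne_of_gt (h2f s hs))).mul hcont
  have hg_nonneg : ∀ s ∈ Ici (0:ℝ), 0 ≤ g s := by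
    intro s hs
    have h1 : (1:ℝ) ≤ 2 + f s := by have := hpos s hs; linarith
    exact mul_nonneg (Real.log_nonneg h1) (hpos s hs)
  -- f ≤ F on Ici 0
  have hfF : ∀ s, 0 ≤ s → f s ≤ F s := fun s hs => hineq s hs
  -- f 0 ≤ F s for s ≥ 0
  have hF0le : ∀ s, 0 ≤ s → f 0 ≤ F s := by
    intro s hs
    have hint : 0 ≤ ∫ s' in (0:ℝ)..s, g s' :=
      intervalIntegral.integral_nonneg hs (fun u hu => hg_nonneg u hu.1)
    have : 0 ≤ A * ∫ s' in (0:ℝ)..s, g s' := mul_nonneg hA.le hint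
    simp only [hF_def]; linarith
  have h2F : ∀ s, 0 ≤ s → (2:ℝ) < 2 + F s + 0 ∨ True := fun _ _ => Or.inr trivial
  have hFpos : ∀ s, 0 ≤ s → (1:ℝ) < 2 + F s := by
    intro s hs; have := hF0le s hs; linarith
  have hlogFpos : ∀ s, 0 ≤ s → 0 < Real.log (2 + F s) := fun s hs =>
    Real.log_pos (hFpos s hs)
  -- integrability of g on [0, t₀+1]
  have hg_int : ∀ b : ℝ, 0 ≤ b → IntervalIntegrable g MeasureTheory.volume 0 b := by
    intro b hb
    apply ContinuousOn.intervalIntegrable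
    apply hg_cont.mono
    rw [uIcc_of_le hb]
    exact fun x hx => hx.1
  -- derivative of F at interior points
  have hderivF : ∀ x ∈ Ioo (0:ℝ) t₀, HasDerivAt F (A * g x) x := by
    intro x hx
    have hmeas : StronglyMeasurableAtFilter g (nhds x) MeasureTheory.volume := by
      refine ContinuousAt.stronglyMeasurableAtFilter isOpen_Ioi ?_ x hx.1
      intro y hy
      exact hg_cont.continuousAt (Ici_mem_nhds (by exact hy))
    have hca : ContinuousAt g x :=
      hg_cont.continuousAt (Ici_mem_nhds hx.1)
    have h1 : HasDerivAt (fun u => ∫ s' in (0:ℝ)..u, g s') (g x) x :=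
      intervalIntegral.integral_hasDerivAt_right (hg_int x hx.1.le) hmeas hca
    simpa [hF_def] using (h1.const_mul A).const_add (f 0)
  -- φ and its derivative
  set φ : ℝ → ℝ := fun s => Real.log (Real.log (2 + F s)) with hφ_def
  have hderivφ : ∀ x ∈ Ioo (0:ℝ) t₀,
      HasDerivAt φ (A * g x / (2 + F x) / Real.log (2 + F x)) x := by
    intro x hx
    have h2Fpos : (0:ℝ) < 2 + F x := lt_trans one_pos (hFpos x hx.1.le)
    have h1 : HasDerivAt (fun s => 2 + F s) (A * g x) x := (hderivF x hx).const_add 2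
    have h2 := h1.log (ne_of_gt h2Fpos)
    exact h2.log (ne_of_gt (hlogFpos x hx.1.le))
  -- derivative bound
  have hbound : ∀ x ∈ Ioo (0:ℝ) t₀,
      A * g x / (2 + F x) / Real.log (2 + F x) ≤ A := by
    intro x hx
    have hx0 : (0:ℝ) ≤ x := hx.1.le
    have h2Fpos : (0:ℝ) < 2 + F x := lt_trans one_pos (hFpos x hx0)
    have hlogpos := hlogFpos x hx0
    have hfx : 0 ≤ f x := hpos x hx0
    have hle : f x ≤ F x := hfF x hx0
    have hlog_le : Real.log (2 + f x) ≤ Real.log (2 + F x) :=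
      Real.log_le_log (h2f x hx0) (by linarith)
    have hg_le : g x ≤ (2 + F x) * Real.log (2 + F x) := by
      have h1 : Real.log (2 + f x) * f x ≤ Real.log (2 + F x) * (2 + F x) := by
        apply mul_le_mul hlog_le (by linarith) hfx hlogpos.le
      calc g x ≤ Real.log (2 + F x) * (2 + F x) := h1
        _ = (2 + F x) * Real.log (2 + F x) := mul_comm _ _
    rw [div_div, div_le_iff₀ (by positivity)]
    calc A * g x ≤ A * ((2 + F x) * Real.log (2 + F x)) :=
          mul_le_mul_of_nonneg_left hg_le hA.le
      _ = A * ((2 + F x) * Real.log (2 + F x)) := rfl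
  -- ψ and monotonicity
  set ψ : ℝ → ℝ := fun s => A * s + φ 0 - φ s with hψ_def
  have hF_cont : ContinuousOn F (Icc 0 t₀) := by
    have hint : MeasureTheory.IntegrableOn g (uIcc (0:ℝ) t₀) MeasureTheory.volume := by
      rw [uIcc_of_le ht₀]
      exact (hg_cont.mono (fun x hx => hx.1)).integrableOn_Icc
    have := intervalIntegral.continuousOn_primitive_interval hint
    rw [uIcc_of_le ht₀] at this
    exact continuousOn_const.add (continuousOn_const.mul this)
  have hφ_cont : ContinuousOn φ (Icc 0 t₀) := by
    have h1 : ContinuousOn (fun s => 2 + F s) (Icc 0 t₀) := continuousOn_const.add hF_cont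
    have h2 : ContinuousOn (fun s => Real.log (2 + F s)) (Icc 0 t₀) :=
      h1.log (fun s hs => ne_of_gt (lt_trans one_pos (hFpos s hs.1)))
    exact h2.log (fun s hs => ne_of_gt (hlogFpos s hs.1))
  have hψderiv : ∀ x ∈ Ioo (0:ℝ) t₀,
      HasDerivAt ψ (A - A * g x / (2 + F x) / Real.log (2 + F x)) x := by
    intro x hx
    have h1 : HasDerivAt (fun s : ℝ => A * s + φ 0) A x := by
      simpa using ((hasDerivAt_id x).const_mul A).add_const (φ 0)
    exact h1.sub (hderivφ x hx)
  have hmonoψ : MonotoneOn ψ (Icc 0 t₀) := by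
    apply monotoneOn_of_deriv_nonneg (convex_Icc 0 t₀)
    · exact (continuousOn_const.mul continuousOn_id |>.add continuousOn_const).sub hφ_cont
    · rw [interior_Icc]
      exact fun x hx => (hψderiv x hx).differentiableAt.differentiableWithinAt
    · rw [interior_Icc]
      intro x hx
      rw [(hψderiv x hx).deriv]
      have := hbound x hx
      linarith
  have hψle : ψ 0 ≤ ψ t₀ :=
    hmonoψ (left_mem_Icc.mpr ht₀) (right_mem_Icc.mpr ht₀) ht₀
  -- unfold ψ
  have hφineq : φ t₀ ≤ A * t₀ + φ 0 := by
    simp only [hψ_def, mul_zero, zero_add] at hψle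
    linarith
  -- F 0 = f 0
  have hF0 : F 0 = f 0 := by simp [hF_def]
  -- conclude
  have hlogF0 : Real.log (2 + F 0) = Real.log (2 + f 0) := by rw [hF0]
  have h2Ft₀pos : (0:ℝ) < 2 + F t₀ := lt_trans one_pos (hFpos t₀ ht₀)
  have hlogt₀pos := hlogFpos t₀ ht₀
  have hlog0pos := hlogFpos 0 le_rfl
  have step1 : Real.log (2 + F t₀) ≤ Real.exp (A * t₀) * Real.log (2 + f 0) := by
    have h1 : Real.log (2 + F t₀) = Real.exp (φ t₀) := by
      rw [hφ_def]; rw [Real.exp_log hlogt₀pos]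
    have h2 : Real.exp (φ t₀) ≤ Real.exp (A * t₀ + φ 0) := Real.exp_le_exp.mpr hφineq
    have h3 : Real.exp (A * t₀ + φ 0) = Real.exp (A * t₀) * Real.log (2 + f 0) := by
      rw [Real.exp_add, hφ_def]
      rw [Real.exp_log hlog0pos, hlogF0]
    rw [h1]; rw [← h3]; exact h2
  have step2 : 2 + f t₀ ≤ 2 + F t₀ := by have := hfF t₀ ht₀; linarith
  have step3 : 2 + F t₀ ≤ (2 + f 0) ^ Real.exp (A * t₀) := by
    rw [Real.rpow_def_of_pos (by linarith : (0:ℝ) < 2 + f 0)]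
    calc 2 + F t₀ = Real.exp (Real.log (2 + F t₀)) := (Real.exp_log h2Ft₀pos).symm
      _ ≤ Real.exp (Real.exp (A * t₀) * Real.log (2 + f 0)) := Real.exp_le_exp.mpr step1
      _ = Real.exp (Real.log (2 + f 0) * Real.exp (A * t₀)) := by rw [mul_comm]
  linarith
end
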